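/- arXiv:nlin/0007018 — 8 statements merged into one kernel-verified Lean document; each statement's English description precedes it below -/
import Mathlib

section
/- Let n ∈ ℕ, let f : ℝⁿ × ℝ → ℝⁿ be continuous, bounded, 2π-periodic in its second argument, and Lipschitz in its first argument uniformly in the second, and let g : ℝⁿ × ℝ × ℝ → ℝⁿ be continuous and bounded. Define the average ⟨f⟩(y) = (1/2π)∫₀^{2π} f(y,t) dt. Then for every x₀ ∈ ℝⁿ and every L > 0 there exist constants C > 0 and ε₀ > 0 such that for all ε ∈ (0, ε₀]: if x : [0, L/ε] → ℝⁿ solves ẋ(t) = ε f(x(t), t) + ε² g(x(t), t, ε) with x(0) = x₀, and y : [0, L/ε] → ℝⁿ solves ẏ(t) = ε ⟨f⟩(y(t)) with y(0) = x₀, then ‖x(t) − y(t)‖ ≤ C ε for all t ∈ [0, L/ε]. -/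
open Real MeasureTheory intervalIntegral Set

variable {E : Type*} [NormedAddCommGroup E] [NormedSpace ℝ E] [CompleteSpace E]

/-- Integral of a zero-average, periodic-in-time, Lipschitz-in-space field along a slowly
varying curve grows slowly. -/
lemma avg_key (h : E × ℝ → E) (hc : Continuous h)
    (M' K' δ : ℝ) (hM' : 0 ≤ M') (hK' : 0 ≤ K') (hδ : 0 ≤ δ)
    (hbd : ∀ q, ‖h q‖ ≤ M')
    (hper : ∀ z t, h (z, t + 2*π) = h (z, t))
    (hzero : ∀ z, (∫ t in (0:ℝ)..(2*π), h (z, t)) = 0)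
    (hlip : ∀ t z z', ‖h (z, t) - h (z', t)‖ ≤ K' * ‖z - z'‖)
    (w : ℝ → E) (hw : Continuous w)
    (hwlip : ∀ s r, ‖w s - w r‖ ≤ δ * |s - r|) :
    ∀ T, 0 ≤ T → ‖∫ s in (0:ℝ)..T, h (w s, s)‖ ≤ 2*π*K'*δ*T + 2*π*M' := by
  have hπ : (0:ℝ) < 2*π := by positivity
  have hcont : Continuous fun s => h (w s, s) := hc.comp ((hw.prodMk continuous_id))
  have hint : ∀ a b : ℝ, IntervalIntegrable (fun s => h (w s, s)) volume a b :=
    fun a b => hcont.intervalIntegrable a b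
  -- per-block estimate
  have block : ∀ a : ℝ, ‖∫ s in a..(a + 2*π), h (w s, s)‖ ≤ 2*π * (K' * (δ * (2*π))) := by
    intro a
    have hz : (∫ s in a..(a + 2*π), h (w a, s)) = 0 := by
      have hp : Function.Periodic (fun t => h (w a, t)) (2*π) := fun t => hper (w a) t
      have := hp.intervalIntegral_add_eq a 0
      simpa [hzero (w a)] using this
    have hint2 : IntervalIntegrable (fun s => h (w a, s)) volume a (a + 2*π) :=
      (hc.comp (continuous_const.prodMk continuous_id)).intervalIntegrable _ _
    have heq : (∫ s in a..(a + 2*π), h (w s, s))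
        = ∫ s in a..(a + 2*π), (h (w s, s) - h (w a, s)) := by
      rw [intervalIntegral.integral_sub (hint _ _) hint2, hz, sub_zero]
    rw [heq]
    have hb : ∀ s ∈ Set.uIoc a (a + 2*π), ‖h (w s, s) - h (w a, s)‖ ≤ K' * (δ * (2*π)) := by
      intro s hs
      rw [Set.uIoc_of_le (by linarith)] at hs
      calc ‖h (w s, s) - h (w a, s)‖ ≤ K' * ‖w s - w a‖ := hlip s _ _
        _ ≤ K' * (δ * |s - a|) := by
            exact mul_le_mul_of_nonneg_left (hwlip s a) hK'
        _ ≤ K' * (δ * (2*π)) := by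
            have : |s - a| ≤ 2*π := by
              rw [abs_le]; constructor <;> [linarith [hs.1]; linarith [hs.2]]
            exact mul_le_mul_of_nonneg_left (mul_le_mul_of_nonneg_left this hδ) hK'
    calc ‖∫ s in a..(a + 2*π), (h (w s, s) - h (w a, s))‖
        ≤ K' * (δ * (2*π)) * |a + 2*π - a| :=
          intervalIntegral.norm_integral_le_of_norm_le_const hb
      _ = 2*π * (K' * (δ * (2*π))) := by
          rw [show a + 2*π - a = 2*π by ring, abs_of_pos hπ]; ring
  -- multi-block estimate
  have blocks : ∀ m : ℕ, ‖∫ s in (0:ℝ)..(2*π*m), h (w s, s)‖ ≤ m * (2*π * (K' * (δ * (2*π)))) := by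
    intro m
    induction m with
    | zero => simp
    | succ m ih =>
      have hsplit : (∫ s in (0:ℝ)..(2*π*(m+1)), h (w s, s))
          = (∫ s in (0:ℝ)..(2*π*m), h (w s, s)) + ∫ s in (2*π*m)..(2*π*m + 2*π), h (w s, s) := by
        rw [intervalIntegral.integral_add_adjacent_intervals (hint _ _) (hint _ _)]
        norm_num [mul_add]
      push_cast
      rw [show (2:ℝ)*π*(m+1) = 2*π*((m:ℝ)+1) by push_cast; ring] at hsplit
      calc ‖∫ s in (0:ℝ)..(2*π*((m:ℝ)+1)), h (w s, s)‖
          ≤ ‖∫ s in (0:ℝ)..(2*π*(m:ℝ)), h (w s, s)‖ + ‖∫ s in (2*π*(m:ℝ))..(2*π*(m:ℝ) + 2*π), h (w s, s)‖ := by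
            rw [hsplit]; exact norm_add_le _ _
        _ ≤ m * (2*π * (K' * (δ * (2*π)))) + 2*π * (K' * (δ * (2*π))) := by
            exact add_le_add ih (block _)
        _ = ((m:ℝ)+1) * (2*π * (K' * (δ * (2*π)))) := by ring
  intro T hT
  set m : ℕ := ⌊T / (2*π)⌋₊ with hm
  have h1 : 2*π*m ≤ T := by
    have := Nat.floor_le (a := T / (2*π)) (by positivity)
    calc 2*π*m ≤ 2*π*(T/(2*π)) := by nlinarith
      _ = T := by field_simp
  have h2 : T < 2*π*m + 2*π := by
    have := Nat.lt_floor_add_one (T / (2*π))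
    have : T / (2*π) < (m:ℝ) + 1 := by exact_mod_cast this
    have := (div_lt_iff₀ hπ).mp this
    nlinarith
  have hsplit : (∫ s in (0:ℝ)..T, h (w s, s))
      = (∫ s in (0:ℝ)..(2*π*m), h (w s, s)) + ∫ s in (2*π*m)..T, h (w s, s) := by
    rw [intervalIntegral.integral_add_adjacent_intervals (hint _ _) (hint _ _)]
  have tail : ‖∫ s in (2*π*m)..T, h (w s, s)‖ ≤ 2*π*M' := by
    calc ‖∫ s in (2*π*m)..T, h (w s, s)‖ ≤ M' * |T - 2*π*m| :=
        intervalIntegral.norm_integral_le_of_norm_le_const (fun s _ => hbd _)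
      _ ≤ M' * (2*π) := by
          apply mul_le_mul_of_nonneg_left _ hM'
          rw [abs_of_nonneg (by linarith)]; linarith
      _ = 2*π*M' := by ring
  have hmT : (m:ℝ) * (2*π * (K' * (δ * (2*π)))) ≤ 2*π*K'*δ*T := by
    have hm2 : 2*π*(m:ℝ) ≤ T := h1
    have h3 : 0 ≤ 2*π*K'*δ := by positivity
    have := mul_le_mul_of_nonneg_left hm2 h3
    nlinarith
  calc ‖∫ s in (0:ℝ)..T, h (w s, s)‖
      ≤ ‖∫ s in (0:ℝ)..(2*π*m), h (w s, s)‖ + ‖∫ s in (2*π*m)..T, h (w s, s)‖ := by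
        rw [hsplit]; exact norm_add_le _ _
    _ ≤ m * (2*π * (K' * (δ * (2*π)))) + 2*π*M' := add_le_add (blocks m) tail
    _ ≤ 2*π*K'*δ*T + 2*π*M' := by linarith

set_option maxHeartbeats 1000000 in
/-- Averaging theorem, part (i): solutions of the slow periodically forced system
`ẋ = ε f(x,t) + ε² g(x,t,ε)` and of the averaged system `ẏ = ε ⟨f⟩(y)` with the same
initial condition stay `O(ε)`-close on the time scale `1/ε`. -/
theorem averaging_closeness
    (n : ℕ)
    (f : EuclideanSpace ℝ (Fin n) × ℝ → EuclideanSpace ℝ (Fin n))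
    (g : EuclideanSpace ℝ (Fin n) × ℝ × ℝ → EuclideanSpace ℝ (Fin n))
    (hf_cont : Continuous f)
    (hf_bdd : ∃ M : ℝ, ∀ q, ‖f q‖ ≤ M)
    (hf_per : ∀ x t, f (x, t + 2 * π) = f (x, t))
    (hf_lip : ∃ Lip : NNReal, ∀ t, LipschitzWith Lip fun x => f (x, t))
    (hg_cont : Continuous g)
    (hg_bdd : ∃ M : ℝ, ∀ q, ‖g q‖ ≤ M)
    (favg : EuclideanSpace ℝ (Fin n) → EuclideanSpace ℝ (Fin n))
    (hfavg : ∀ y, favg y = (1 / (2 * π)) • ∫ t in (0:ℝ)..(2 * π), f (y, t)) :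
    ∀ x₀ : EuclideanSpace ℝ (Fin n), ∀ L : ℝ, 0 < L →
      ∃ C : ℝ, 0 < C ∧ ∃ ε₀ : ℝ, 0 < ε₀ ∧
        ∀ ε : ℝ, 0 < ε → ε ≤ ε₀ →
          ∀ x y : ℝ → EuclideanSpace ℝ (Fin n),
            (∀ t ∈ Set.Icc (0:ℝ) (L / ε),
              HasDerivAt x (ε • f (x t, t) + ε ^ 2 • g (x t, t, ε)) t) →
            x 0 = x₀ →
            (∀ t ∈ Set.Icc (0:ℝ) (L / ε), HasDerivAt y (ε • favg (y t)) t) →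
            y 0 = x₀ →
            ∀ t ∈ Set.Icc (0:ℝ) (L / ε), ‖x t - y t‖ ≤ C * ε := by
  intro x₀ L hL
  have hπ : (0:ℝ) < 2*π := by positivity
  obtain ⟨M, hM⟩ := hf_bdd
  have hM0 : 0 ≤ M := le_trans (norm_nonneg _) (hM (x₀, 0))
  obtain ⟨N, hN⟩ := hg_bdd
  have hN0 : 0 ≤ N := le_trans (norm_nonneg _) (hN (x₀, 0, 0))
  obtain ⟨Lip, hLip⟩ := hf_lip
  set K : ℝ := max (Lip : ℝ) 1 with hKdef
  have hK1 : (1:ℝ) ≤ K := le_max_right _ _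
  have hKpos : (0:ℝ) < K := lt_of_lt_of_le one_pos hK1
  -- Lipschitz bound for f in space
  have flip : ∀ t (z z' : EuclideanSpace ℝ (Fin n)), ‖f (z, t) - f (z', t)‖ ≤ K * ‖z - z'‖ := by
    intro t z z'
    have := (hLip t).dist_le_mul z z'
    rw [dist_eq_norm, dist_eq_norm] at this
    calc ‖f (z, t) - f (z', t)‖ ≤ (Lip : ℝ) * ‖z - z'‖ := this
      _ ≤ K * ‖z - z'‖ := mul_le_mul_of_nonneg_right (le_max_left _ _) (norm_nonneg _)
  -- integrability of slices of f
  have fslice_int : ∀ (z : EuclideanSpace ℝ (Fin n)) (a b : ℝ),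
      IntervalIntegrable (fun t => f (z, t)) volume a b := fun z a b =>
    (hf_cont.comp (continuous_const.prodMk continuous_id)).intervalIntegrable a b
  -- bound for favg
  have favg_bd : ∀ z, ‖favg z‖ ≤ M := by
    intro z
    rw [hfavg, norm_smul]
    have h1 : ‖∫ t in (0:ℝ)..(2*π), f (z, t)‖ ≤ M * |2*π - 0| :=
      intervalIntegral.norm_integral_le_of_norm_le_const (fun t _ => hM _)
    rw [sub_zero, abs_of_pos hπ] at h1
    calc ‖(1 / (2*π) : ℝ)‖ * ‖∫ t in (0:ℝ)..(2*π), f (z, t)‖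
        ≤ (1 / (2*π)) * (M * (2*π)) := by
          apply mul_le_mul _ h1 (norm_nonneg _) (by positivity)
          rw [Real.norm_eq_abs, abs_of_pos (by positivity)]
      _ = M := by field_simp
  -- Lipschitz bound for favg
  have favg_lip : ∀ z z', ‖favg z - favg z'‖ ≤ K * ‖z - z'‖ := by
    intro z z'
    rw [hfavg, hfavg, ← smul_sub, ← intervalIntegral.integral_sub (fslice_int z 0 (2*π)) (fslice_int z' 0 (2*π))]
    rw [norm_smul]
    have h1 : ‖∫ t in (0:ℝ)..(2*π), (f (z, t) - f (z', t))‖ ≤ (K * ‖z - z'‖) * |2*π - 0| :=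
      intervalIntegral.norm_integral_le_of_norm_le_const (fun t _ => flip t z z')
    rw [sub_zero, abs_of_pos hπ] at h1
    calc ‖(1 / (2*π) : ℝ)‖ * ‖∫ t in (0:ℝ)..(2*π), (f (z, t) - f (z', t))‖
        ≤ (1 / (2*π)) * ((K * ‖z - z'‖) * (2*π)) := by
          apply mul_le_mul _ h1 (norm_nonneg _) (by positivity)
          rw [Real.norm_eq_abs, abs_of_pos (by positivity)]
      _ = K * ‖z - z'‖ := by field_simp
  have favg_cont : Continuous favg := by
    apply (LipschitzWith.of_dist_le_mul (K := ⟨K, hKpos.le⟩) ?_).continuous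
    intro z z'
    rw [dist_eq_norm, dist_eq_norm]
    exact favg_lip z z'
  -- the oscillating part
  set h : EuclideanSpace ℝ (Fin n) × ℝ → EuclideanSpace ℝ (Fin n) :=
    fun q => f q - favg q.1 with hhdef
  have hc : Continuous h := hf_cont.sub (favg_cont.comp continuous_fst)
  have hbd : ∀ q, ‖h q‖ ≤ 2*M := by
    intro q
    calc ‖f q - favg q.1‖ ≤ ‖f q‖ + ‖favg q.1‖ := norm_sub_le _ _
      _ ≤ 2*M := by linarith [hM q, favg_bd q.1]
  have hper : ∀ z t, h (z, t + 2*π) = h (z, t) := by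
    intro z t; simp only [hhdef, hf_per]
  have hzero : ∀ z, (∫ t in (0:ℝ)..(2*π), h (z, t)) = 0 := by
    intro z
    have : (∫ t in (0:ℝ)..(2*π), h (z, t))
        = (∫ t in (0:ℝ)..(2*π), f (z, t)) - ∫ t in (0:ℝ)..(2*π), (favg z) := by
      rw [← intervalIntegral.integral_sub (fslice_int z 0 (2*π))
        (intervalIntegrable_const)]
    rw [this, intervalIntegral.integral_const, hfavg, sub_zero, smul_smul]
    rw [show (2*π) * (1 / (2*π)) = (1:ℝ) by field_simp, one_smul, sub_self]
  have hlip : ∀ t (z z' : EuclideanSpace ℝ (Fin n)), ‖h (z, t) - h (z', t)‖ ≤ (2*K) * ‖z - z'‖ := by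
    intro t z z'
    calc ‖h (z, t) - h (z', t)‖ = ‖(f (z, t) - f (z', t)) - (favg z - favg z')‖ := by
          simp only [hhdef]; congr 1; abel
      _ ≤ ‖f (z, t) - f (z', t)‖ + ‖favg z - favg z'‖ := norm_sub_le _ _
      _ ≤ (2*K) * ‖z - z'‖ := by linarith [flip t z z', favg_lip z z']
  -- constants
  set A : ℝ := 2*π*(2*K)*M*L + 2*π*(2*M) with hAdef
  have hA0 : 0 ≤ A := by positivity
  set C : ℝ := A + (K*A + N)/K * Real.exp (K*L) + 1 with hCdef
  refine ⟨C, by positivity, 1, one_pos, ?_⟩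
  intro ε hε hε1 x y hx hx0 hy hy0
  set T' : ℝ := L / ε with hT'def
  have hT' : 0 < T' := div_pos hL hε
  -- continuity of y on the interval
  have hycont : ContinuousOn y (Set.Icc 0 T') := fun t ht =>
    ((hy t ht).continuousAt).continuousWithinAt
  -- y is (ε M)-Lipschitz on the interval
  have hyl : ∀ s ∈ Set.Icc (0:ℝ) T', ∀ r ∈ Set.Icc (0:ℝ) T',
      ‖y s - y r‖ ≤ (ε*M) * ‖s - r‖ := by
    intro s hs r hr
    apply Convex.norm_image_sub_le_of_norm_hasDerivWithin_le
      (f' := fun t => ε • favg (y t)) (fun t ht => (hy t ht).hasDerivWithinAt)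
      ?_ (convex_Icc _ _) hr hs
    intro t ht
    rw [norm_smul, Real.norm_eq_abs, abs_of_pos hε]
    exact mul_le_mul_of_nonneg_left (favg_bd (y t)) hε.le
  -- projection onto the interval
  set proj : ℝ → ℝ := fun s => max 0 (min s T') with hprojdef
  have proj_mem : ∀ s, proj s ∈ Set.Icc (0:ℝ) T' :=
    fun s => ⟨le_max_left _ _, max_le hT'.le (min_le_right _ _)⟩
  have proj_fix : ∀ s ∈ Set.Icc (0:ℝ) T', proj s = s := by
    intro s hs
    simp only [hprojdef]
    rw [min_eq_left hs.2, max_eq_right hs.1]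
  have proj_cont : Continuous proj := continuous_const.max (continuous_id.min continuous_const)
  have proj_lip : ∀ s r, |proj s - proj r| ≤ |s - r| := by
    intro s r
    calc |max 0 (min s T') - max 0 (min r T')| ≤ |min s T' - min r T'| := by
          simpa [max_comm] using abs_max_sub_max_le_abs (min s T') (min r T') 0
      _ ≤ |s - r| := abs_min_sub_min_le_max s T' r T' |>.trans (by simp)
  -- slowly varying curve
  set w : ℝ → EuclideanSpace ℝ (Fin n) := fun s => y (proj s) with hwdef
  have hwcont : Continuous w := hycont.comp_continuous proj_cont proj_mem
  have hwlip : ∀ s r, ‖w s - w r‖ ≤ (ε*M) * |s - r| := by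
    intro s r
    calc ‖y (proj s) - y (proj r)‖ ≤ (ε*M) * ‖proj s - proj r‖ :=
        hyl _ (proj_mem s) _ (proj_mem r)
      _ ≤ (ε*M) * |s - r| := by
          rw [Real.norm_eq_abs]
          exact mul_le_mul_of_nonneg_left (proj_lip s r) (by positivity)
  -- averaging bound on the integral of the oscillating part
  have avg : ∀ T ∈ Set.Icc (0:ℝ) T', ‖∫ s in (0:ℝ)..T, h (w s, s)‖ ≤ A := by
    intro T hT
    have := avg_key h hc (2*M) (2*K) (ε*M) (by linarith) (by positivity) (by positivity)
      hbd hper hzero hlip w hwcont hwlip T hT.1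
    refine this.trans ?_
    have h1 : (ε*M) * T ≤ M * L := by
      have := mul_le_mul_of_nonneg_left hT.2 (show (0:ℝ) ≤ ε*M by positivity)
      calc (ε*M)*T ≤ ε*M*(L/ε) := this
        _ = M * L := by field_simp
    have h2 : 0 ≤ 2*π*(2*K) := by positivity
    simp only [hAdef]
    nlinarith
  -- the corrected difference ψ
  set c : ℝ → EuclideanSpace ℝ (Fin n) := fun s => h (w s, s) with hcdef
  have hccont : Continuous c := hc.comp (hwcont.prodMk continuous_id)
  set ψ : ℝ → EuclideanSpace ℝ (Fin n) :=
    fun t => x t - y t - ε • ∫ s in (0:ℝ)..t, c s with hψdef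
  have hG : ∀ t : ℝ, HasDerivAt (fun u => ∫ s in (0:ℝ)..u, c s) (c t) t := fun t =>
    intervalIntegral.integral_hasDerivAt_right (hccont.intervalIntegrable _ _)
      (hccont.stronglyMeasurable.stronglyMeasurableAtFilter) hccont.continuousAt
  have hψd : ∀ t ∈ Set.Icc (0:ℝ) T', HasDerivAt ψ
      ((ε • f (x t, t) + ε ^ 2 • g (x t, t, ε)) - ε • favg (y t) - ε • c t) t := by
    intro t ht
    exact ((hx t ht).sub (hy t ht)).sub ((hG t).const_smul ε)
  have hψcont : ContinuousOn ψ (Set.Icc 0 T') := fun t ht =>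
    ((hψd t ht).continuousAt).continuousWithinAt
  have hψ0 : ψ 0 = 0 := by
    simp [hψdef, hx0, hy0, intervalIntegral.integral_same]
  -- bound on ψ'
  have hψbound : ∀ t ∈ Set.Ico (0:ℝ) T',
      ‖(ε • f (x t, t) + ε ^ 2 • g (x t, t, ε)) - ε • favg (y t) - ε • c t‖
        ≤ (ε*K) * ‖ψ t‖ + ε^2 * (K*A + N) := by
    intro t ht
    have ht' : t ∈ Set.Icc (0:ℝ) T' := ⟨ht.1, ht.2.le⟩
    have hwt : w t = y t := by rw [hwdef]; simp only; rw [proj_fix t ht']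
    have hct : c t = f (y t, t) - favg (y t) := by
      simp only [hcdef, hhdef, hwt]
    have heq : (ε • f (x t, t) + ε ^ 2 • g (x t, t, ε)) - ε • favg (y t) - ε • c t
        = ε • (f (x t, t) - f (y t, t)) + ε ^ 2 • g (x t, t, ε) := by
      rw [hct, smul_sub, smul_sub]; abel
    rw [heq]
    have hxy : ‖x t - y t‖ ≤ ‖ψ t‖ + ε * A := by
      have : x t - y t = ψ t + ε • ∫ s in (0:ℝ)..t, c s := by simp [hψdef]
      rw [this]
      calc ‖ψ t + ε • ∫ s in (0:ℝ)..t, c s‖ ≤ ‖ψ t‖ + ‖ε • ∫ s in (0:ℝ)..t, c s‖ :=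
          norm_add_le _ _
        _ ≤ ‖ψ t‖ + ε * A := by
            have := avg t ht'
            rw [norm_smul, Real.norm_eq_abs, abs_of_pos hε]
            exact add_le_add_right (mul_le_mul_of_nonneg_left this hε.le) _
    calc ‖ε • (f (x t, t) - f (y t, t)) + ε ^ 2 • g (x t, t, ε)‖
        ≤ ‖ε • (f (x t, t) - f (y t, t))‖ + ‖ε ^ 2 • g (x t, t, ε)‖ := norm_add_le _ _
      _ ≤ ε * (K * ‖x t - y t‖) + ε^2 * N := by
          rw [norm_smul, norm_smul, Real.norm_eq_abs, Real.norm_eq_abs,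
            abs_of_pos hε, abs_of_pos (by positivity : (0:ℝ) < ε^2)]
          exact add_le_add (mul_le_mul_of_nonneg_left (flip t _ _) hε.le)
            (mul_le_mul_of_nonneg_left (hN _) (by positivity))
      _ ≤ ε * (K * (‖ψ t‖ + ε * A)) + ε^2 * N := by
          have h4 := mul_le_mul_of_nonneg_left
            (mul_le_mul_of_nonneg_left hxy hKpos.le) hε.le
          linarith
      _ = (ε*K) * ‖ψ t‖ + ε^2 * (K*A + N) := by ring
  -- Gronwall
  have gron := norm_le_gronwallBound_of_norm_deriv_right_le (a := 0) (b := T')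
    (δ := 0) (K := ε*K) (ε := ε^2 * (K*A + N)) hψcont
    (fun t ht => (hψd t ⟨ht.1, ht.2.le⟩).hasDerivWithinAt)
    (by rw [hψ0]; simp) hψbound
  -- conclude
  intro t ht
  have hψt : ‖ψ t‖ ≤ ε * ((K*A + N)/K * Real.exp (K*L)) := by
    have h1 := gron t ht
    rw [gronwallBound_of_K_ne_0 (by positivity : ε*K ≠ 0)] at h1
    simp only [zero_mul, zero_add, sub_zero] at h1
    have hexp : Real.exp (ε*K*t) - 1 ≤ Real.exp (K*L) := by
      have h2 : ε*K*t ≤ K*L := by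
        have := mul_le_mul_of_nonneg_left ht.2 (show (0:ℝ) ≤ ε*K by positivity)
        calc ε*K*t ≤ ε*K*(L/ε) := this
          _ = K*L := by field_simp
      linarith [Real.exp_le_exp.mpr h2, Real.exp_pos (ε*K*t)]
    have h3 : ε^2 * (K*A+N) / (ε*K) = ε * ((K*A+N)/K) := by
      field_simp
    rw [h3] at h1
    calc ‖ψ t‖ ≤ ε * ((K*A+N)/K) * (Real.exp (ε*K*t) - 1) := h1
      _ ≤ ε * ((K*A+N)/K) * Real.exp (K*L) := by
          apply mul_le_mul_of_nonneg_left hexp (by positivity)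
      _ = ε * ((K*A + N)/K * Real.exp (K*L)) := by ring
  have hxy : ‖x t - y t‖ ≤ ‖ψ t‖ + ε * A := by
    have : x t - y t = ψ t + ε • ∫ s in (0:ℝ)..t, c s := by simp [hψdef]
    rw [this]
    calc ‖ψ t + ε • ∫ s in (0:ℝ)..t, c s‖ ≤ ‖ψ t‖ + ‖ε • ∫ s in (0:ℝ)..t, c s‖ :=
        norm_add_le _ _
      _ ≤ ‖ψ t‖ + ε * A := by
          rw [norm_smul, Real.norm_eq_abs, abs_of_pos hε]
          exact add_le_add_right (mul_le_mul_of_nonneg_left (avg t ht) hε.le) _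
  calc ‖x t - y t‖ ≤ ‖ψ t‖ + ε * A := hxy
    _ ≤ ε * ((K*A + N)/K * Real.exp (K*L)) + ε * A := by linarith
    _ ≤ C * ε := by
        rw [hCdef]; nlinarith [hε.le]
end

section
/- Let a > 0, e ∈ [0,1), and i, ω ∈ ℝ. With X(E) = a(cos E − e), Y(E) = a√(1−e²) sin E, define z(E) = sin i · (X(E) sin ω + Y(E) cos ω). Then the averages over the mean anomaly satisfy (1/2π)∫₀^{2π} z(E)(1 − e cos E) dE = −(3/2) a e sin i sin ω, and (1/2π)∫₀^{2π} z(E)²(1 − e cos E) dE = a² sin²i [1/2 + (e²/4)(3 − 5 cos 2ω)]. -/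
open Real

lemma kepler_key1 (A B e : ℝ) :
    (∫ E in (0:ℝ)..(2 * π),
        (A * (Real.cos E - e) + B * Real.sin E) * (1 - e * Real.cos E))
      = -(3 * π * e * A) := by
  have h : ∀ x ∈ Set.uIcc (0:ℝ) (2 * π),
      HasDerivAt (fun E => A * Real.sin E
          - A * e * (E / 2 + Real.sin E * Real.cos E / 2)
          - A * e * E + A * e ^ 2 * Real.sin E - B * Real.cos E
          - B * e * (Real.sin E ^ 2 / 2))
        ((A * (Real.cos x - e) + B * Real.sin x) * (1 - e * Real.cos x)) x := by
    intro x _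
    have hs := Real.hasDerivAt_sin x
    have hc := Real.hasDerivAt_cos x
    have H := (((((hs.const_mul A).sub
        ((((hasDerivAt_id x).div_const 2).add ((hs.mul hc).div_const 2)).const_mul
          (A * e))).sub
        ((hasDerivAt_id x).const_mul (A * e))).add (hs.const_mul (A * e ^ 2))).sub
        (hc.const_mul B)).sub (((hs.pow 2).div_const 2).const_mul (B * e))
    refine H.congr_deriv ?_
    symm
    linear_combination (-(A * e) / 2) * Real.sin_sq_add_cos_sq x
  rw [intervalIntegral.integral_eq_sub_of_hasDerivAt h
    (Continuous.intervalIntegrable (by fun_prop) 0 (2 * π))]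
  simp [Real.sin_two_pi, Real.cos_two_pi]
  ring

lemma kepler_key2 (A B e : ℝ) :
    (∫ E in (0:ℝ)..(2 * π),
        (A * (Real.cos E - e) + B * Real.sin E) ^ 2 * (1 - e * Real.cos E))
      = π * (A ^ 2 * (1 + 4 * e ^ 2) + B ^ 2) := by
  have h : ∀ x ∈ Set.uIcc (0:ℝ) (2 * π),
      HasDerivAt (fun E =>
          A ^ 2 * (E / 2 + Real.sin E * Real.cos E / 2
            - e * (Real.sin E - Real.sin E ^ 3 / 3) - 2 * e * Real.sin E
            + 2 * e ^ 2 * (E / 2 + Real.sin E * Real.cos E / 2) + e ^ 2 * E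
            - e ^ 3 * Real.sin E)
          + 2 * A * B * ((1 + e ^ 2) * (Real.sin E ^ 2 / 2)
            + e * (Real.cos E ^ 3 / 3) + e * Real.cos E)
          + B ^ 2 * (E / 2 - Real.sin E * Real.cos E / 2
            - e * (Real.sin E ^ 3 / 3)))
        ((A * (Real.cos x - e) + B * Real.sin x) ^ 2 * (1 - e * Real.cos x)) x := by
    intro x _
    have hs := Real.hasDerivAt_sin x
    have hc := Real.hasDerivAt_cos x
    have H1 := ((((((((hasDerivAt_id x).div_const 2).add
        ((hs.mul hc).div_const 2)).sub
        ((hs.sub ((hs.pow 3).div_const 3)).const_mul e)).sub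
        (hs.const_mul (2 * e))).add
        ((((hasDerivAt_id x).div_const 2).add
          ((hs.mul hc).div_const 2)).const_mul (2 * e ^ 2))).add
        ((hasDerivAt_id x).const_mul (e ^ 2))).sub
        (hs.const_mul (e ^ 3))).const_mul (A ^ 2)
    have H2 := (((((hs.pow 2).div_const 2).const_mul (1 + e ^ 2)).add
        (((hc.pow 3).div_const 3).const_mul e)).add
        (hc.const_mul e)).const_mul (2 * A * B)
    have H3 := ((((hasDerivAt_id x).div_const 2).sub
        ((hs.mul hc).div_const 2)).sub
        (((hs.pow 3).div_const 3).const_mul e)).const_mul (B ^ 2)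
    have H := (H1.add H2).add H3
    refine H.congr_deriv ?_
    symm
    linear_combination (A ^ 2 * (1 / 2 - e * Real.cos x + e ^ 2) + B ^ 2 / 2) *
      Real.sin_sq_add_cos_sq x
  rw [intervalIntegral.integral_eq_sub_of_hasDerivAt h
    (Continuous.intervalIntegrable (by fun_prop) 0 (2 * π))]
  simp [Real.sin_two_pi, Real.cos_two_pi]
  ring

/-- Averages over the mean anomaly of the orbit's z-coordinate
`z = sin i (X sin ω + Y cos ω)`: one has `⟨z⟩ = −(3/2) a e sin i sin ω` and
`⟨z²⟩ = a² sin²i [1/2 + (e²/4)(3 − 5 cos 2ω)]`. -/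
theorem kepler_mean_anomaly_averages_z
    (a e i ω : ℝ) (ha : 0 < a) (he0 : 0 ≤ e) (he1 : e < 1) :
    (1 / (2 * π)) * ∫ E in (0:ℝ)..(2 * π),
        (Real.sin i * ((a * (Real.cos E - e)) * Real.sin ω
          + (a * Real.sqrt (1 - e ^ 2) * Real.sin E) * Real.cos ω))
          * (1 - e * Real.cos E)
      = -(3 / 2) * a * e * Real.sin i * Real.sin ω ∧
    (1 / (2 * π)) * ∫ E in (0:ℝ)..(2 * π),
        (Real.sin i * ((a * (Real.cos E - e)) * Real.sin ω
          + (a * Real.sqrt (1 - e ^ 2) * Real.sin E) * Real.cos ω)) ^ 2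
          * (1 - e * Real.cos E)
      = a ^ 2 * Real.sin i ^ 2 * (1 / 2 + (e ^ 2 / 4) * (3 - 5 * Real.cos (2 * ω))) := by
  have hπ : (π : ℝ) ≠ 0 := Real.pi_ne_zero
  set A := Real.sin i * a * Real.sin ω with hA
  set B := Real.sin i * a * Real.sqrt (1 - e ^ 2) * Real.cos ω with hB
  have hBsq : Real.sqrt (1 - e ^ 2) ^ 2 = 1 - e ^ 2 :=
    Real.sq_sqrt (by nlinarith)
  constructor
  · have h1 : (∫ E in (0:ℝ)..(2 * π),
        (Real.sin i * ((a * (Real.cos E - e)) * Real.sin ω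
          + (a * Real.sqrt (1 - e ^ 2) * Real.sin E) * Real.cos ω))
          * (1 - e * Real.cos E))
        = ∫ E in (0:ℝ)..(2 * π),
          (A * (Real.cos E - e) + B * Real.sin E) * (1 - e * Real.cos E) := by
      apply intervalIntegral.integral_congr
      intro x _
      simp only [hA, hB]
      ring
    rw [h1, kepler_key1]
    field_simp [hA]
    ring
  · have h2 : (∫ E in (0:ℝ)..(2 * π),
        (Real.sin i * ((a * (Real.cos E - e)) * Real.sin ω
          + (a * Real.sqrt (1 - e ^ 2) * Real.sin E) * Real.cos ω)) ^ 2
          * (1 - e * Real.cos E))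
        = ∫ E in (0:ℝ)..(2 * π),
          (A * (Real.cos E - e) + B * Real.sin E) ^ 2 * (1 - e * Real.cos E) := by
      apply intervalIntegral.integral_congr
      intro x _
      simp only [hA, hB]
      ring
    rw [h2, kepler_key2]
    have key : A ^ 2 * (1 + 4 * e ^ 2) + B ^ 2
        = 2 * (a ^ 2 * Real.sin i ^ 2
            * (1 / 2 + (e ^ 2 / 4) * (3 - 5 * Real.cos (2 * ω)))) := by
      rw [Real.cos_two_mul, hA, hB]
      linear_combination (Real.sin i ^ 2 * a ^ 2 * Real.cos ω ^ 2) * hBsq +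
        (a ^ 2 * Real.sin i ^ 2 * (1 + 4 * e ^ 2)) * Real.sin_sq_add_cos_sq ω
    rw [key]
    field_simp
end

section
/- Let a > 0, e ∈ [0,1), and i, ω ∈ ℝ. With X(E) = a(cos E − e), Y(E) = a√(1−e²) sin E, r(E) = a(1 − e cos E), define the quadratic Zeeman perturbation H₁(E) = (1/16)[(1 + cos²i) r(E)² + sin²i (cos 2ω · (X(E)² − Y(E)²) − sin 2ω · 2 X(E) Y(E))]. Then its average over the mean anomaly equals (1/2π)∫₀^{2π} H₁(E)(1 − e cos E) dE = (a²/16)[(1 + cos²i)(1 + (3/2)e²) + (5/2) e² sin²i cos 2ω]. -/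
open Real

/-- Average of a trig polynomial of degree 3 over a full period. -/
lemma trig_avg (k0 k1 k2 k3 m0 m1 m2 : ℝ) :
    ∫ E in (0:ℝ)..(2 * π),
        (k0 + k1 * Real.cos E + k2 * Real.cos E ^ 2 + k3 * Real.cos E ^ 3
          + m0 * Real.sin E + m1 * Real.sin E * Real.cos E
          + m2 * Real.sin E * Real.cos E ^ 2)
      = 2 * π * (k0 + k2 / 2) := by
  have hderiv : ∀ E ∈ Set.uIcc (0:ℝ) (2 * π),
      HasDerivAt (fun E : ℝ => (k0 + k2 / 2) * E + (k1 + 2 * k3 / 3) * Real.sin E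
          + (k2 / 2) * (Real.sin E * Real.cos E)
          + (k3 / 3) * (Real.sin E * Real.cos E ^ 2)
          - m0 * Real.cos E - (m1 / 2) * Real.cos E ^ 2 - (m2 / 3) * Real.cos E ^ 3)
        (k0 + k1 * Real.cos E + k2 * Real.cos E ^ 2 + k3 * Real.cos E ^ 3
          + m0 * Real.sin E + m1 * Real.sin E * Real.cos E
          + m2 * Real.sin E * Real.cos E ^ 2) E := by
    intro E _
    have H := ((((((hasDerivAt_id E).const_mul (k0 + k2 / 2)).add
        ((Real.hasDerivAt_sin E).const_mul (k1 + 2 * k3 / 3))).add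
        (((Real.hasDerivAt_sin E).mul (Real.hasDerivAt_cos E)).const_mul (k2 / 2))).add
        (((Real.hasDerivAt_sin E).mul ((Real.hasDerivAt_cos E).pow 2)).const_mul (k3 / 3))).sub
        ((Real.hasDerivAt_cos E).const_mul m0)).sub
        (((Real.hasDerivAt_cos E).pow 2).const_mul (m1 / 2))
    have H2 := H.sub (((Real.hasDerivAt_cos E).pow 3).const_mul (m2 / 3))
    refine HasDerivAt.congr_deriv H2 (Eq.symm ?_)
    have h := Real.sin_sq_add_cos_sq E
    push_cast [Pi.pow_apply]
    linear_combination (k2 / 2 + 2 * k3 / 3 * Real.cos E) * h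
  rw [intervalIntegral.integral_eq_sub_of_hasDerivAt hderiv (by
    apply Continuous.intervalIntegrable; fun_prop)]
  simp [Real.sin_two_pi, Real.cos_two_pi]
  ring

/-- The average over the mean anomaly of the quadratic Zeeman perturbation
`H₁ = (1/16)[(1 + cos²i) r² + sin²i (cos 2ω (X² − Y²) − 2 sin 2ω · XY)]`
equals `(a²/16)[(1 + cos²i)(1 + (3/2)e²) + (5/2) e² sin²i cos 2ω]`. -/
theorem averaged_quadratic_zeeman
    (a e i ω : ℝ) (ha : 0 < a) (he0 : 0 ≤ e) (he1 : e < 1) :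
    (1 / (2 * π)) * ∫ E in (0:ℝ)..(2 * π),
        ((1 / 16) * ((1 + Real.cos i ^ 2) * (a * (1 - e * Real.cos E)) ^ 2
          + Real.sin i ^ 2 *
            (Real.cos (2 * ω) * ((a * (Real.cos E - e)) ^ 2
                - (a * Real.sqrt (1 - e ^ 2) * Real.sin E) ^ 2)
              - Real.sin (2 * ω) * (2 * (a * (Real.cos E - e))
                  * (a * Real.sqrt (1 - e ^ 2) * Real.sin E)))))
          * (1 - e * Real.cos E)
      = (a ^ 2 / 16) * ((1 + Real.cos i ^ 2) * (1 + (3 / 2) * e ^ 2)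
          + (5 / 2) * e ^ 2 * Real.sin i ^ 2 * Real.cos (2 * ω)) := by
  set s := Real.sqrt (1 - e ^ 2) with hs_def
  have hs : s ^ 2 = 1 - e ^ 2 := Real.sq_sqrt (by nlinarith)
  set C := Real.cos i ^ 2
  set S := Real.sin i ^ 2
  set cw := Real.cos (2 * ω)
  set sw := Real.sin (2 * ω)
  -- the seven coefficients of the trig polynomial
  set k0 : ℝ := a ^ 2 * (1 / 16 + C / 16 - S * cw / 16 + e ^ 2 * S * cw / 8) with hk0
  set k1 : ℝ := a ^ 2 * e * (-3 / 16 - S * cw / 16 - 3 * C / 16 - e ^ 2 * S * cw / 8) with hk1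
  set k2 : ℝ := a ^ 2 * (S * cw / 8 + 3 * e ^ 2 / 16 + e ^ 2 * S * cw / 16
      + 3 * e ^ 2 * C / 16) with hk2
  set k3 : ℝ := a ^ 2 * e * (-S * cw / 8 - e ^ 2 / 16 + e ^ 2 * S * cw / 16
      - e ^ 2 * C / 16) with hk3
  set m0 : ℝ := a ^ 2 * e * S * sw * s / 8 with hm0
  set m1 : ℝ := a ^ 2 * (-S * sw * s / 8 - e ^ 2 * S * sw * s / 8) with hm1
  set m2 : ℝ := a ^ 2 * e * S * sw * s / 8 with hm2
  have hpt : ∀ E : ℝ,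
      ((1 / 16) * ((1 + C) * (a * (1 - e * Real.cos E)) ^ 2
          + S * (cw * ((a * (Real.cos E - e)) ^ 2 - (a * s * Real.sin E) ^ 2)
              - sw * (2 * (a * (Real.cos E - e)) * (a * s * Real.sin E)))))
          * (1 - e * Real.cos E)
        = k0 + k1 * Real.cos E + k2 * Real.cos E ^ 2 + k3 * Real.cos E ^ 3
          + m0 * Real.sin E + m1 * Real.sin E * Real.cos E
          + m2 * Real.sin E * Real.cos E ^ 2 := by
    intro E
    have h1 : Real.sin E ^ 2 = 1 - Real.cos E ^ 2 := Real.sin_sq E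
    rw [hk0, hk1, hk2, hk3, hm0, hm1, hm2]
    linear_combination (a ^ 2 * S * cw * s ^ 2 / 16 * (e * Real.cos E - 1)) * h1
      + (a ^ 2 * S * cw / 16 * (-1 + Real.cos E ^ 2 + e * Real.cos E
          - e * Real.cos E ^ 3)) * hs
  rw [intervalIntegral.integral_congr (fun E _ => hpt E), trig_avg]
  have hπ : (π : ℝ) ≠ 0 := Real.pi_ne_zero
  field_simp
  rw [hk0, hk2]
  ring
end

section
/- Fix Λ > 0 and K with 0 < |K| < Λ. For G ∈ (|K|, Λ) and ω ∈ ℝ define h(G, ω) = (1 + K²/G²)(1 + (3/2)(1 − G²/Λ²)) + (5/2)(1 − G²/Λ²)(1 − K²/G²) cos 2ω (the averaged quadratic Zeeman Hamiltonian with e² = 1 − G²/Λ² and cos i = K/G). Then for ω ∈ {π/2, 3π/2} and G = (√5 |K| Λ)^{1/2}, both partial derivatives ∂h/∂G and ∂h/∂ω vanish; moreover this value of G satisfies |K| < G < Λ if and only if |K| < Λ/√5. -/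
open Real

lemma zeeman_derivG (Λ K : ℝ) (hΛ : 0 < Λ) (hK : 0 < |K|) (ω : ℝ)
    (hc : Real.cos (2 * ω) = -1) :
    deriv (fun G => (1 + K ^ 2 / G ^ 2) * (1 + (3 / 2) * (1 - G ^ 2 / Λ ^ 2))
        + (5 / 2) * (1 - G ^ 2 / Λ ^ 2) * (1 - K ^ 2 / G ^ 2) * Real.cos (2 * ω))
      (Real.sqrt (Real.sqrt 5 * |K| * Λ)) = 0 := by
  set G0 := Real.sqrt (Real.sqrt 5 * |K| * Λ) with hG0def
  have h5 : (0:ℝ) < Real.sqrt 5 := Real.sqrt_pos.mpr (by norm_num)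
  have harg : 0 < Real.sqrt 5 * |K| * Λ := by positivity
  have hG0 : 0 < G0 := Real.sqrt_pos.mpr harg
  have hG0sq : G0 ^ 2 = Real.sqrt 5 * |K| * Λ := Real.sq_sqrt harg.le
  have hG0ne : G0 ≠ 0 := hG0.ne'
  have hΛne : (Λ:ℝ) ^ 2 ≠ 0 := by positivity
  have hsq : HasDerivAt (fun G : ℝ => G ^ 2) (2 * G0) G0 := by
    simpa using hasDerivAt_pow 2 G0
  have hdiv : HasDerivAt (fun G : ℝ => K ^ 2 / G ^ 2)
      ((0 * G0 ^ 2 - K ^ 2 * (2 * G0)) / (G0 ^ 2) ^ 2) G0 :=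
    (hasDerivAt_const G0 (K ^ 2)).div hsq (by positivity)
  have hdiv2 : HasDerivAt (fun G : ℝ => G ^ 2 / Λ ^ 2) (2 * G0 / Λ ^ 2) G0 :=
    hsq.div_const _
  have h1 : HasDerivAt (fun G : ℝ => 1 + K ^ 2 / G ^ 2)
      ((0 * G0 ^ 2 - K ^ 2 * (2 * G0)) / (G0 ^ 2) ^ 2) G0 := by
    exact ((hasDerivAt_const G0 (1:ℝ)).add hdiv).congr_deriv (by ring)
  have h2 : HasDerivAt (fun G : ℝ => 1 + (3 / 2) * (1 - G ^ 2 / Λ ^ 2))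
      ((3 / 2) * (0 - 2 * G0 / Λ ^ 2)) G0 := by
    exact ((hasDerivAt_const G0 (1:ℝ)).add
      (((hasDerivAt_const G0 1).sub hdiv2).const_mul (3 / 2))).congr_deriv (by ring)
  have h3 : HasDerivAt (fun G : ℝ => (5 / 2) * (1 - G ^ 2 / Λ ^ 2))
      ((5 / 2) * (0 - 2 * G0 / Λ ^ 2)) G0 :=
    ((hasDerivAt_const G0 1).sub hdiv2).const_mul (5 / 2)
  have h4 : HasDerivAt (fun G : ℝ => 1 - K ^ 2 / G ^ 2)
      (0 - (0 * G0 ^ 2 - K ^ 2 * (2 * G0)) / (G0 ^ 2) ^ 2) G0 :=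
    (hasDerivAt_const G0 1).sub hdiv
  have htot : HasDerivAt (fun G => (1 + K ^ 2 / G ^ 2) * (1 + (3 / 2) * (1 - G ^ 2 / Λ ^ 2))
        + (5 / 2) * (1 - G ^ 2 / Λ ^ 2) * (1 - K ^ 2 / G ^ 2) * Real.cos (2 * ω)) _ G0 :=
    ((h1.mul h2).add (((h3.mul h4)).mul_const (Real.cos (2 * ω))))
  rw [htot.deriv, hc]
  have hG4 : G0 ^ 4 = 5 * K ^ 2 * Λ ^ 2 := by
    have h5sq : (Real.sqrt 5) ^ 2 = 5 := Real.sq_sqrt (by norm_num)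
    have hKsq : |K| ^ 2 = K ^ 2 := sq_abs K
    calc G0 ^ 4 = (G0 ^ 2) ^ 2 := by ring
    _ = (Real.sqrt 5) ^ 2 * |K| ^ 2 * Λ ^ 2 := by rw [hG0sq]; ring
    _ = 5 * K ^ 2 * Λ ^ 2 := by rw [h5sq, hKsq]
  have hsimp : (0 * G0 ^ 2 - K ^ 2 * (2 * G0)) / (G0 ^ 2) ^ 2
        * (1 + 3 / 2 * (1 - G0 ^ 2 / Λ ^ 2))
      + (1 + K ^ 2 / G0 ^ 2) * (3 / 2 * (0 - 2 * G0 / Λ ^ 2))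
      + (5 / 2 * (0 - 2 * G0 / Λ ^ 2) * (1 - K ^ 2 / G0 ^ 2)
          + 5 / 2 * (1 - G0 ^ 2 / Λ ^ 2)
            * (0 - (0 * G0 ^ 2 - K ^ 2 * (2 * G0)) / (G0 ^ 2) ^ 2)) * (-1)
      = 2 * G0 / Λ ^ 2 - 10 * K ^ 2 / G0 ^ 3 := by
    field_simp
    ring
  rw [hsimp, sub_eq_zero, div_eq_div_iff (by positivity) (by positivity)]
  linear_combination 2 * hG4

/-- The averaged quadratic Zeeman Hamiltonian
`h(G,ω) = (1 + K²/G²)(1 + (3/2)(1 − G²/Λ²)) + (5/2)(1 − G²/Λ²)(1 − K²/G²) cos 2ω`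
has critical points (the Z-orbits) at `ω ∈ {π/2, 3π/2}`, `G = (√5 |K| Λ)^{1/2}`,
and this value of `G` lies in `(|K|, Λ)` exactly when `|K| < Λ/√5`. -/
theorem zeeman_z_orbit_critical_points
    (Λ K : ℝ) (hΛ : 0 < Λ) (hK : 0 < |K|) (hKΛ : |K| < Λ)
    (h : ℝ → ℝ → ℝ)
    (hdef : ∀ G ω, h G ω =
      (1 + K ^ 2 / G ^ 2) * (1 + (3 / 2) * (1 - G ^ 2 / Λ ^ 2))
        + (5 / 2) * (1 - G ^ 2 / Λ ^ 2) * (1 - K ^ 2 / G ^ 2) * Real.cos (2 * ω)) :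
    (∀ ω ∈ ({π / 2, 3 * π / 2} : Set ℝ),
      deriv (fun G => h G ω) (Real.sqrt (Real.sqrt 5 * |K| * Λ)) = 0 ∧
      deriv (fun ω' => h (Real.sqrt (Real.sqrt 5 * |K| * Λ)) ω') ω = 0) ∧
    ((|K| < Real.sqrt (Real.sqrt 5 * |K| * Λ) ∧ Real.sqrt (Real.sqrt 5 * |K| * Λ) < Λ)
      ↔ |K| < Λ / Real.sqrt 5) := by
  have h5 : (0:ℝ) < Real.sqrt 5 := Real.sqrt_pos.mpr (by norm_num)
  have harg : 0 < Real.sqrt 5 * |K| * Λ := by positivity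
  set G0 := Real.sqrt (Real.sqrt 5 * |K| * Λ) with hG0def
  have hG0sq : G0 ^ 2 = Real.sqrt 5 * |K| * Λ := Real.sq_sqrt harg.le
  have hG0 : 0 < G0 := Real.sqrt_pos.mpr harg
  have h5sq : (Real.sqrt 5) ^ 2 = 5 := Real.sq_sqrt (by norm_num)
  constructor
  · intro ω hω
    have hc : Real.cos (2 * ω) = -1 := by
      rcases hω with hω | hω
      · rw [hω]; rw [show 2 * (π / 2) = π by ring, Real.cos_pi]
      · rw [hω]; rw [show 2 * (3 * π / 2) = π + 2 * π by ring,
          Real.cos_add_two_pi, Real.cos_pi]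
    have hs : Real.sin (2 * ω) = 0 := by
      rcases hω with hω | hω
      · rw [hω]; rw [show 2 * (π / 2) = π by ring, Real.sin_pi]
      · rw [hω]; rw [show 2 * (3 * π / 2) = π + 2 * π by ring,
          Real.sin_add_two_pi, Real.sin_pi]
    constructor
    · simp only [hdef]
      exact zeeman_derivG Λ K hΛ hK ω hc
    · simp only [hdef]
      have hcos : HasDerivAt (fun ω' : ℝ => Real.cos (2 * ω'))
          (-Real.sin (2 * ω) * 2) ω := by
        exact ((Real.hasDerivAt_cos (2 * ω)).comp ω
          ((hasDerivAt_id ω).const_mul 2)).congr_deriv (by simp)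
      have htot : HasDerivAt (fun ω' : ℝ =>
          (1 + K ^ 2 / G0 ^ 2) * (1 + (3 / 2) * (1 - G0 ^ 2 / Λ ^ 2))
            + (5 / 2) * (1 - G0 ^ 2 / Λ ^ 2) * (1 - K ^ 2 / G0 ^ 2) * Real.cos (2 * ω'))
          (0 + (5 / 2) * (1 - G0 ^ 2 / Λ ^ 2) * (1 - K ^ 2 / G0 ^ 2)
            * (-Real.sin (2 * ω) * 2)) ω :=
        (hasDerivAt_const ω _).add (hcos.const_mul _)
      rw [htot.deriv, hs]
      ring
  · constructor
    · rintro ⟨h1, h2⟩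
      have hsq2 : G0 ^ 2 < Λ ^ 2 := by nlinarith
      rw [hG0sq] at hsq2
      rw [lt_div_iff₀ h5]
      nlinarith
    · intro hlt
      rw [lt_div_iff₀ h5] at hlt
      constructor
      · have : |K| ^ 2 < G0 ^ 2 := by
          rw [hG0sq]
          have h1 : (1:ℝ) < Real.sqrt 5 := by nlinarith
          have h2 : |K| < Real.sqrt 5 * Λ := by nlinarith
          nlinarith [mul_lt_mul_of_pos_left h2 hK]
        nlinarith [abs_nonneg K, hG0]
      · have : G0 ^ 2 < Λ ^ 2 := by
          rw [hG0sq]; nlinarith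
        nlinarith [hG0, hΛ]
end

section
/- Fix Λ > 0, F ≠ 0, and K with 0 < |K| < Λ. For G ∈ (|K|, Λ) and ω ∈ ℝ define the averaged Stark Hamiltonian h(G, ω) = −(3/2) F Λ² e sin i sin ω, with e = √(1 − G²/Λ²) and sin i = √(1 − K²/G²). Then for ω ∈ {π/2, 3π/2} and G = (|K| Λ)^{1/2}, both partial derivatives ∂h/∂G and ∂h/∂ω vanish, and at this point e = sin i = √(1 − |K|/Λ). -/
open Real

/-- The averaged Stark Hamiltonian `h(G,ω) = −(3/2) F Λ² e sin i sin ω`, with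
`e = √(1 − G²/Λ²)` and `sin i = √(1 − K²/G²)`, has critical points (the S-orbits)
at `ω ∈ {π/2, 3π/2}`, `G = (|K| Λ)^{1/2}`, where `e = sin i = √(1 − |K|/Λ)`. -/
theorem stark_s_orbit_critical_points
    (Λ F K : ℝ) (hΛ : 0 < Λ) (hF : F ≠ 0) (hK : 0 < |K|) (hKΛ : |K| < Λ)
    (h : ℝ → ℝ → ℝ)
    (hdef : ∀ G ω, h G ω = -(3 / 2) * F * Λ ^ 2 * Real.sqrt (1 - G ^ 2 / Λ ^ 2)
        * Real.sqrt (1 - K ^ 2 / G ^ 2) * Real.sin ω) :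
    ∀ ω ∈ ({π / 2, 3 * π / 2} : Set ℝ),
      deriv (fun G => h G ω) (Real.sqrt (|K| * Λ)) = 0 ∧
      deriv (fun ω' => h (Real.sqrt (|K| * Λ)) ω') ω = 0 ∧
      Real.sqrt (1 - (Real.sqrt (|K| * Λ)) ^ 2 / Λ ^ 2) = Real.sqrt (1 - |K| / Λ) ∧
      Real.sqrt (1 - K ^ 2 / (Real.sqrt (|K| * Λ)) ^ 2) = Real.sqrt (1 - |K| / Λ) := by
  intro ω hω
  set G₀ : ℝ := Real.sqrt (|K| * Λ) with hG₀def
  have hΛ0 : Λ ≠ 0 := ne_of_gt hΛ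
  have hKL0 : 0 ≤ |K| * Λ := mul_nonneg (abs_nonneg K) hΛ.le
  have hG₀sq : G₀ ^ 2 = |K| * Λ := Real.sq_sqrt hKL0
  have hG₀pos : 0 < G₀ := Real.sqrt_pos.mpr (mul_pos hK hΛ)
  have hG₀0 : G₀ ≠ 0 := ne_of_gt hG₀pos
  set t : ℝ := 1 - |K| / Λ with htdef
  have ht : 0 < t := by
    rw [htdef]
    have : |K| / Λ < 1 := (div_lt_one hΛ).mpr hKΛ
    linarith
  have hst : Real.sqrt t ≠ 0 := ne_of_gt (Real.sqrt_pos.mpr ht)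
  have e1 : 1 - G₀ ^ 2 / Λ ^ 2 = t := by
    rw [hG₀sq, htdef]; field_simp
  have e2 : 1 - K ^ 2 / G₀ ^ 2 = t := by
    rw [hG₀sq, htdef]; field_simp; rw [← sq_abs K]; ring
  have hcos : Real.cos ω = 0 := by
    rcases hω with hω | hω
    · rw [hω, Real.cos_pi_div_two]
    · simp only [Set.mem_singleton_iff] at hω
      rw [hω]
      have : 3 * π / 2 = π / 2 + π := by ring
      rw [this, Real.cos_add_pi, Real.cos_pi_div_two, neg_zero]
  refine ⟨?_, ?_, by rw [e1], by rw [e2]⟩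
  · -- ∂h/∂G = 0
    have hfe : (fun G => h G ω) = fun G => -(3 / 2) * F * Λ ^ 2
        * Real.sqrt (1 - G ^ 2 / Λ ^ 2) * Real.sqrt (1 - K ^ 2 / G ^ 2) * Real.sin ω :=
      funext fun G => hdef G ω
    rw [hfe]
    have hu : HasDerivAt (fun G : ℝ => 1 - G ^ 2 / Λ ^ 2) (-(2 * G₀ / Λ ^ 2)) G₀ := by
      have h1 : HasDerivAt (fun G : ℝ => G ^ 2) (2 * G₀) G₀ := by
        simpa using hasDerivAt_pow 2 G₀
      have := (h1.div_const (Λ ^ 2)).const_sub 1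
      convert this using 1
    have hv : HasDerivAt (fun G : ℝ => 1 - K ^ 2 / G ^ 2) (2 * K ^ 2 / G₀ ^ 3) G₀ := by
      have h1 : HasDerivAt (fun G : ℝ => G ^ 2) (2 * G₀) G₀ := by
        simpa using hasDerivAt_pow 2 G₀
      have h2 : HasDerivAt (fun G : ℝ => K ^ 2 / G ^ 2)
          ((0 * G₀ ^ 2 - K ^ 2 * (2 * G₀)) / (G₀ ^ 2) ^ 2) G₀ :=
        (hasDerivAt_const G₀ (K ^ 2)).div h1 (pow_ne_zero 2 hG₀0)
      have := h2.const_sub 1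
      refine this.congr_deriv ?_
      rw [show (0 * G₀ ^ 2 - K ^ 2 * (2 * G₀)) / (G₀ ^ 2) ^ 2 = (-(2 * K ^ 2)) / G₀ ^ 3 by rw [div_eq_div_iff (pow_ne_zero 2 (pow_ne_zero 2 hG₀0)) (pow_ne_zero 3 hG₀0)]; ring, neg_div, neg_neg]
    have hune : (1 - G₀ ^ 2 / Λ ^ 2) ≠ 0 := by rw [e1]; exact ne_of_gt ht
    have hvne : (1 - K ^ 2 / G₀ ^ 2) ≠ 0 := by rw [e2]; exact ne_of_gt ht
    have hsu : HasDerivAt (fun G : ℝ => Real.sqrt (1 - G ^ 2 / Λ ^ 2))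
        (-(2 * G₀ / Λ ^ 2) / (2 * Real.sqrt (1 - G₀ ^ 2 / Λ ^ 2))) G₀ := hu.sqrt hune
    have hsv : HasDerivAt (fun G : ℝ => Real.sqrt (1 - K ^ 2 / G ^ 2))
        (2 * K ^ 2 / G₀ ^ 3 / (2 * Real.sqrt (1 - K ^ 2 / G₀ ^ 2))) G₀ := hv.sqrt hvne
    have h3 : HasDerivAt (fun G : ℝ => -(3 / 2) * F * Λ ^ 2
        * Real.sqrt (1 - G ^ 2 / Λ ^ 2) * Real.sqrt (1 - K ^ 2 / G ^ 2) * Real.sin ω)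
        (((-(3 / 2) * F * Λ ^ 2 * (-(2 * G₀ / Λ ^ 2) / (2 * Real.sqrt (1 - G₀ ^ 2 / Λ ^ 2))))
            * Real.sqrt (1 - K ^ 2 / G₀ ^ 2)
          + (-(3 / 2) * F * Λ ^ 2 * Real.sqrt (1 - G₀ ^ 2 / Λ ^ 2))
            * (2 * K ^ 2 / G₀ ^ 3 / (2 * Real.sqrt (1 - K ^ 2 / G₀ ^ 2)))) * Real.sin ω) G₀ :=
      ((hsu.const_mul (-(3 / 2) * F * Λ ^ 2)).mul hsv).mul_const (Real.sin ω)
    rw [h3.deriv, e1, e2]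
    have hsum : -(2 * G₀ / Λ ^ 2) + 2 * K ^ 2 / G₀ ^ 3 = 0 := by
      have hG4 : G₀ * G₀ ^ 3 = (|K| * Λ) ^ 2 := by
        rw [← hG₀sq]; ring
      field_simp
      rw [← sq_abs K]
      linear_combination (-2) * hG4
    have key : -(3 / 2) * F * Λ ^ 2 * (-(2 * G₀ / Λ ^ 2) / (2 * Real.sqrt t)) * Real.sqrt t
        + -(3 / 2) * F * Λ ^ 2 * Real.sqrt t * (2 * K ^ 2 / G₀ ^ 3 / (2 * Real.sqrt t))
        = -(3 / 2) * F * Λ ^ 2 / 2 * (-(2 * G₀ / Λ ^ 2) + 2 * K ^ 2 / G₀ ^ 3) := by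
      field_simp
      ring
    rw [key, hsum, mul_zero, zero_mul]
  · -- ∂h/∂ω = 0
    have hfe : (fun ω' => h G₀ ω') = fun ω' => (-(3 / 2) * F * Λ ^ 2
        * Real.sqrt (1 - G₀ ^ 2 / Λ ^ 2) * Real.sqrt (1 - K ^ 2 / G₀ ^ 2)) * Real.sin ω' := by
      funext ω'; rw [hdef]
    rw [hfe, deriv_const_mul _ Real.differentiable_sin.differentiableAt]
    simp [hcos]
end

section
/- Let e ∈ [0,1) and i, ω ∈ ℝ. Then e |sin i| |sin ω| ≤ 1 − √(1−e²) |cos i|. Equivalently, for Λ > 0 and |K| ≤ G ≤ Λ with G > 0, setting e = √(1 − G²/Λ²) and sin i = √(1 − K²/G²), one has e sin i |sin ω| ≤ 1 − |K|/Λ; and if 0 < |K| < Λ, equality holds if and only if |sin ω| = 1 and G² = |K| Λ (equivalently e = sin i = √(1 − |K|/Λ)). -/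
open Real

lemma key_ineq {a b : ℝ} (ha0 : 0 ≤ a) (ha1 : a ≤ 1) (hb0 : 0 ≤ b) (hb1 : b ≤ 1) :
    Real.sqrt (1 - a ^ 2) * Real.sqrt (1 - b ^ 2) ≤ 1 - a * b := by
  have h1 : (0:ℝ) ≤ 1 - a ^ 2 := by nlinarith
  have h3 : (0:ℝ) ≤ 1 - a * b := by nlinarith
  rw [← Real.sqrt_mul h1]
  calc Real.sqrt ((1 - a ^ 2) * (1 - b ^ 2)) ≤ Real.sqrt ((1 - a * b) ^ 2) := by
        apply Real.sqrt_le_sqrt; nlinarith [sq_nonneg (a - b)]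
    _ = 1 - a * b := Real.sqrt_sq h3

lemma key_strict {a b : ℝ} (ha0 : 0 ≤ a) (ha1 : a ≤ 1) (hb0 : 0 ≤ b) (hb1 : b ≤ 1)
    (hne : a ≠ b) (hab : 0 < 1 - a * b) :
    Real.sqrt (1 - a ^ 2) * Real.sqrt (1 - b ^ 2) < 1 - a * b := by
  have h1 : (0:ℝ) ≤ 1 - a ^ 2 := by nlinarith
  have hd : a - b ≠ 0 := sub_ne_zero.mpr hne
  have hd2 : 0 < (a - b) ^ 2 := by positivity
  have h2 : (0:ℝ) ≤ 1 - b ^ 2 := by nlinarith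
  rw [← Real.sqrt_mul h1]
  calc Real.sqrt ((1 - a ^ 2) * (1 - b ^ 2)) < Real.sqrt ((1 - a * b) ^ 2) := by
        apply Real.sqrt_lt_sqrt (mul_nonneg h1 h2) (by nlinarith)
    _ = 1 - a * b := Real.sqrt_sq hab.le

set_option maxHeartbeats 1000000

/-- The electric action bound: `e |sin i| |sin ω| ≤ 1 − √(1−e²)|cos i|`; equivalently,
in Delaunay actions with `e = √(1 − G²/Λ²)`, `sin i = √(1 − K²/G²)`, one has
`e sin i |sin ω| ≤ 1 − |K|/Λ`, with equality (for `0 < |K| < Λ`) iff `|sin ω| = 1`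
and `G² = |K| Λ`. -/
theorem electric_action_bound :
    (∀ e i ω : ℝ, 0 ≤ e → e < 1 →
      e * |Real.sin i| * |Real.sin ω| ≤ 1 - Real.sqrt (1 - e ^ 2) * |Real.cos i|) ∧
    (∀ Λ G K ω : ℝ, 0 < Λ → 0 < G → |K| ≤ G → G ≤ Λ →
      Real.sqrt (1 - G ^ 2 / Λ ^ 2) * Real.sqrt (1 - K ^ 2 / G ^ 2) * |Real.sin ω|
        ≤ 1 - |K| / Λ ∧
      (0 < |K| → |K| < Λ →
        (Real.sqrt (1 - G ^ 2 / Λ ^ 2) * Real.sqrt (1 - K ^ 2 / G ^ 2) * |Real.sin ω|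
            = 1 - |K| / Λ
          ↔ |Real.sin ω| = 1 ∧ G ^ 2 = |K| * Λ))) := by
  constructor
  · intro e i ω he0 he1
    set f := Real.sqrt (1 - e ^ 2) with hf
    have hf0 : 0 ≤ f := Real.sqrt_nonneg _
    have hf2 : f ^ 2 = 1 - e ^ 2 := Real.sq_sqrt (by nlinarith)
    set s := |Real.sin i| with hs
    set c := |Real.cos i| with hc
    have hsc : s ^ 2 + c ^ 2 = 1 := by
      simp [hs, hc, sq_abs, Real.sin_sq_add_cos_sq]
    have hs0 : 0 ≤ s := abs_nonneg _
    have hc0 : 0 ≤ c := abs_nonneg _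
    have key : e * s + f * c ≤ 1 := by
      nlinarith [sq_nonneg (e * c - f * s), sq_nonneg (e * s + f * c - 1),
        mul_nonneg (mul_nonneg he0 hs0) (mul_nonneg hf0 hc0)]
    have h1 : e * s * |Real.sin ω| ≤ e * s := by
      have := abs_sin_le_one ω
      nlinarith [mul_nonneg he0 hs0, abs_nonneg (Real.sin ω)]
    linarith
  · intro Λ G K ω hΛ hG hKG hGΛ
    have hGne : G ≠ 0 := hG.ne'
    have hΛne : Λ ≠ 0 := hΛ.ne'
    set x := G / Λ with hxdef
    set y := |K| / G with hydef
    have hx0 : 0 ≤ x := by positivity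
    have hx1 : x ≤ 1 := (div_le_one hΛ).mpr hGΛ
    have hy0 : 0 ≤ y := by positivity
    have hy1 : y ≤ 1 := (div_le_one hG).mpr hKG
    have hex : 1 - G ^ 2 / Λ ^ 2 = 1 - x ^ 2 := by rw [hxdef, div_pow]
    have hey : 1 - K ^ 2 / G ^ 2 = 1 - y ^ 2 := by rw [hydef, div_pow, sq_abs]
    have hxy : x * y = |K| / Λ := by
      rw [hxdef, hydef, div_mul_div_comm, mul_comm G, mul_div_mul_right _ _ hGne]
    have hsin := abs_sin_le_one ω
    have hsin0 : 0 ≤ |Real.sin ω| := abs_nonneg _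
    have hprod0 : 0 ≤ Real.sqrt (1 - x ^ 2) * Real.sqrt (1 - y ^ 2) := by positivity
    have hkey := key_ineq hx0 hx1 hy0 hy1
    have hineq : Real.sqrt (1 - G ^ 2 / Λ ^ 2) * Real.sqrt (1 - K ^ 2 / G ^ 2) * |Real.sin ω|
        ≤ 1 - |K| / Λ := by
      rw [hex, hey, ← hxy]
      calc Real.sqrt (1 - x ^ 2) * Real.sqrt (1 - y ^ 2) * |Real.sin ω|
          ≤ Real.sqrt (1 - x ^ 2) * Real.sqrt (1 - y ^ 2) * 1 :=
            mul_le_mul_of_nonneg_left hsin hprod0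
        _ = Real.sqrt (1 - x ^ 2) * Real.sqrt (1 - y ^ 2) := by ring
        _ ≤ 1 - x * y := hkey
    refine ⟨hineq, ?_⟩
    intro hK0 hKΛ
    have hpos : 0 < 1 - |K| / Λ := by
      rw [sub_pos]; exact (div_lt_one hΛ).mpr hKΛ
    have hGsq : x = y ↔ G ^ 2 = |K| * Λ := by
      rw [hxdef, hydef, div_eq_div_iff hΛne hGne]
      constructor <;> intro h <;> nlinarith
    constructor
    · intro heq
      rw [hex, hey] at heq
      have hxeqy : x = y := by
        by_contra hne
        have hst := key_strict hx0 hx1 hy0 hy1 hne (by rw [hxy]; exact hpos)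
        have hle : Real.sqrt (1 - x ^ 2) * Real.sqrt (1 - y ^ 2) * |Real.sin ω|
            ≤ Real.sqrt (1 - x ^ 2) * Real.sqrt (1 - y ^ 2) :=
          mul_le_of_le_one_right hprod0 hsin
        rw [hxy] at hst
        linarith
      have hG2 : G ^ 2 = |K| * Λ := hGsq.mp hxeqy
      -- with x = y, product = 1 - x*y = 1 - |K|/Λ
      have hprodeq : Real.sqrt (1 - x ^ 2) * Real.sqrt (1 - y ^ 2) = 1 - |K| / Λ := by
        have h0 : (0:ℝ) ≤ 1 - y ^ 2 := by nlinarith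
        calc Real.sqrt (1 - x ^ 2) * Real.sqrt (1 - y ^ 2)
            = Real.sqrt (1 - y ^ 2) * Real.sqrt (1 - y ^ 2) := by rw [hxeqy]
          _ = 1 - y ^ 2 := Real.mul_self_sqrt h0
          _ = 1 - x * y := by rw [hxeqy]; ring
          _ = 1 - |K| / Λ := by rw [hxy]
      rw [hprodeq] at heq
      have : |Real.sin ω| = 1 :=
        mul_left_cancel₀ hpos.ne' (heq.trans (mul_one _).symm)
      exact ⟨this, hG2⟩
    · rintro ⟨hsω, hG2⟩
      have hxeqy : x = y := hGsq.mpr hG2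
      have hprodeq : Real.sqrt (1 - x ^ 2) * Real.sqrt (1 - y ^ 2) = 1 - |K| / Λ := by
        have h0 : (0:ℝ) ≤ 1 - y ^ 2 := by nlinarith
        calc Real.sqrt (1 - x ^ 2) * Real.sqrt (1 - y ^ 2)
            = Real.sqrt (1 - y ^ 2) * Real.sqrt (1 - y ^ 2) := by rw [hxeqy]
          _ = 1 - y ^ 2 := Real.mul_self_sqrt h0
          _ = 1 - x * y := by rw [hxeqy]; ring
          _ = 1 - |K| / Λ := by rw [hxy]
      rw [hex, hey, hprodeq, hsω, mul_one]
end

section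
/- Let a > b > 0 and define ρ(θ) = (√(a² − b²)/2) ∫₀^θ dθ′/(a − b cos θ′) for θ ∈ ℝ. Then for all θ ∈ ℝ: cos ρ(θ) = √(a − b) cos(θ/2)/√(a − b cos θ) and sin ρ(θ) = √(a + b) sin(θ/2)/√(a − b cos θ); in particular, for −π < θ < π one has ρ(θ) = arctan(√((a+b)/(a−b)) tan(θ/2)) (with ρ(±π) = ±π/2 by continuity), and ρ(θ + 2π) = ρ(θ) + π for all θ ∈ ℝ. -/
open Real

lemma hP_pos {a b : ℝ} (hb : 0 < b) (hab : b < a) (θ : ℝ) : 0 < a - b * Real.cos θ := by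
  nlinarith [Real.cos_le_one θ, Real.neg_one_le_cos θ]

lemma sqrtP_deriv {a b : ℝ} (hb : 0 < b) (hab : b < a) (θ : ℝ) :
    HasDerivAt (fun t => Real.sqrt (a - b * Real.cos t))
      (b * Real.sin θ / (2 * Real.sqrt (a - b * Real.cos θ))) θ := by
  have hP := hP_pos hb hab θ
  have h1 : HasDerivAt (fun t : ℝ => a - b * Real.cos t) (b * Real.sin θ) θ := by
    have := ((Real.hasDerivAt_cos θ).const_mul b).const_sub a
    simpa using this
  have h2 := (Real.hasDerivAt_sqrt hP.ne').comp θ h1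
  exact h2.congr_deriv (by ring)

lemma u_deriv {a b : ℝ} (hb : 0 < b) (hab : b < a) (θ : ℝ) :
    HasDerivAt (fun t => Real.sqrt (a - b) * Real.cos (t / 2) / Real.sqrt (a - b * Real.cos t))
      (-(Real.sqrt (a ^ 2 - b ^ 2) / (2 * (a - b * Real.cos θ)))
        * (Real.sqrt (a + b) * Real.sin (θ / 2) / Real.sqrt (a - b * Real.cos θ))) θ := by
  have hP := hP_pos hb hab θ
  have hq : Real.sqrt (a - b * Real.cos θ) ≠ 0 := (Real.sqrt_pos.mpr hP).ne'
  have hn : HasDerivAt (fun t : ℝ => Real.sqrt (a - b) * Real.cos (t / 2))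
      (Real.sqrt (a - b) * (-Real.sin (θ / 2) * (1 / 2))) θ := by
    have h0 : HasDerivAt (fun t : ℝ => t / 2) (1 / 2) θ := (hasDerivAt_id θ).div_const 2
    exact ((Real.hasDerivAt_cos (θ / 2)).comp θ h0).const_mul _
  have hd := hn.div (sqrtP_deriv hb hab θ) hq
  convert hd using 1
  · rfl
  · rfl
  · rfl
  have hq2 : Real.sqrt (a - b * Real.cos θ) ^ 2 = a - b * Real.cos θ := Real.sq_sqrt hP.le
  have hp : Real.sqrt (a + b) ^ 2 = a + b := Real.sq_sqrt (by linarith)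
  have hc : Real.sqrt (a ^ 2 - b ^ 2) = Real.sqrt (a - b) * Real.sqrt (a + b) := by
    rw [← Real.sqrt_mul (by linarith : (0:ℝ) ≤ a - b)]; ring_nf
  have hsin : Real.sin θ = 2 * Real.sin (θ / 2) * Real.cos (θ / 2) := by
    rw [← Real.sin_two_mul]; ring_nf
  have hcos : Real.cos θ = 2 * Real.cos (θ / 2) ^ 2 - 1 := by
    rw [← Real.cos_two_mul]; ring_nf
  rw [hc, hsin]
  field_simp
  linear_combination (-(√(a-b) * sin (θ/2) * √(a - b*cos θ) ^ 2)) * hp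
    - (2 * b * cos (θ/2) ^ 2 * √(a-b) * sin (θ/2)) * hq2
    - (b * √(a-b) * sin (θ/2) * √(a - b*cos θ) ^ 2) * hcos

lemma v_deriv {a b : ℝ} (hb : 0 < b) (hab : b < a) (θ : ℝ) :
    HasDerivAt (fun t => Real.sqrt (a + b) * Real.sin (t / 2) / Real.sqrt (a - b * Real.cos t))
      ((Real.sqrt (a ^ 2 - b ^ 2) / (2 * (a - b * Real.cos θ)))
        * (Real.sqrt (a - b) * Real.cos (θ / 2) / Real.sqrt (a - b * Real.cos θ))) θ := by
  have hP := hP_pos hb hab θ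
  have hq : Real.sqrt (a - b * Real.cos θ) ≠ 0 := (Real.sqrt_pos.mpr hP).ne'
  have hn : HasDerivAt (fun t : ℝ => Real.sqrt (a + b) * Real.sin (t / 2))
      (Real.sqrt (a + b) * (Real.cos (θ / 2) * (1 / 2))) θ := by
    have h0 : HasDerivAt (fun t : ℝ => t / 2) (1 / 2) θ := (hasDerivAt_id θ).div_const 2
    exact ((Real.hasDerivAt_sin (θ / 2)).comp θ h0).const_mul _
  have hd := hn.div (sqrtP_deriv hb hab θ) hq
  convert hd using 1
  · rfl
  · rfl
  · rfl
  have hq2 : Real.sqrt (a - b * Real.cos θ) ^ 2 = a - b * Real.cos θ := Real.sq_sqrt hP.le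
  have hr : Real.sqrt (a - b) ^ 2 = a - b := Real.sq_sqrt (by linarith)
  have hc : Real.sqrt (a ^ 2 - b ^ 2) = Real.sqrt (a - b) * Real.sqrt (a + b) := by
    rw [← Real.sqrt_mul (by linarith : (0:ℝ) ≤ a - b)]; ring_nf
  have hsin : Real.sin θ = 2 * Real.sin (θ / 2) * Real.cos (θ / 2) := by
    rw [← Real.sin_two_mul]; ring_nf
  have hcos : Real.cos θ = 2 * Real.cos (θ / 2) ^ 2 - 1 := by
    rw [← Real.cos_two_mul]; ring_nf
  have hpyth := Real.sin_sq_add_cos_sq (θ / 2)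
  rw [hc, hsin]
  field_simp
  linear_combination (√(a+b) * cos (θ/2) * √(a - b*cos θ) ^ 2) * hr
    - (2 * b * sin (θ/2) ^ 2 * √(a+b) * cos (θ/2)) * hq2
    + (b * √(a+b) * cos (θ/2) * √(a - b*cos θ) ^ 2) * hcos
    + (2 * b * √(a+b) * cos (θ/2) * √(a - b*cos θ) ^ 2) * hpyth

/-- Closed form of the angle function
`ρ(θ) = (√(a² − b²)/2) ∫₀^θ dθ'/(a − b cos θ')` for `a > b > 0`:
`cos ρ(θ) = √(a−b) cos(θ/2)/√(a − b cos θ)`, `sin ρ(θ) = √(a+b) sin(θ/2)/√(a − b cos θ)`;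
on `(−π, π)` one has `ρ(θ) = arctan(√((a+b)/(a−b)) tan(θ/2))`, `ρ(±π) = ±π/2`, and
`ρ(θ + 2π) = ρ(θ) + π`. -/
theorem rho_closed_form
    (a b : ℝ) (hb : 0 < b) (hab : b < a)
    (ρ : ℝ → ℝ)
    (hρ : ∀ θ : ℝ, ρ θ = (Real.sqrt (a ^ 2 - b ^ 2) / 2)
      * ∫ t in (0:ℝ)..θ, 1 / (a - b * Real.cos t)) :
    (∀ θ : ℝ,
      Real.cos (ρ θ) = Real.sqrt (a - b) * Real.cos (θ / 2) / Real.sqrt (a - b * Real.cos θ) ∧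
      Real.sin (ρ θ) = Real.sqrt (a + b) * Real.sin (θ / 2) / Real.sqrt (a - b * Real.cos θ)) ∧
    (∀ θ : ℝ, -π < θ → θ < π →
      ρ θ = Real.arctan (Real.sqrt ((a + b) / (a - b)) * Real.tan (θ / 2))) ∧
    ρ π = π / 2 ∧ ρ (-π) = -(π / 2) ∧
    (∀ θ : ℝ, ρ (θ + 2 * π) = ρ θ + π) := by
  have hba : (0:ℝ) < a - b := by linarith
  have hP : ∀ θ : ℝ, 0 < a - b * Real.cos θ := hP_pos hb hab
  have hq : ∀ θ : ℝ, Real.sqrt (a - b * Real.cos θ) ≠ 0 :=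
    fun θ => (Real.sqrt_pos.mpr (hP θ)).ne'
  have hfc : Continuous fun t : ℝ => 1 / (a - b * Real.cos t) :=
    continuous_const.div (by continuity) fun t => (hP t).ne'
  -- derivative of ρ
  have hρd : ∀ θ : ℝ, HasDerivAt ρ
      (Real.sqrt (a ^ 2 - b ^ 2) / (2 * (a - b * Real.cos θ))) θ := by
    intro θ
    have h1 : HasDerivAt (fun x : ℝ => ∫ t in (0:ℝ)..x, 1 / (a - b * Real.cos t))
        (1 / (a - b * Real.cos θ)) θ :=
      intervalIntegral.integral_hasDerivAt_right (hfc.intervalIntegrable _ _)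
        (hfc.stronglyMeasurableAtFilter _ _) hfc.continuousAt
    have h2 := h1.const_mul (Real.sqrt (a ^ 2 - b ^ 2) / 2)
    have hfun : ρ = fun x : ℝ => (Real.sqrt (a ^ 2 - b ^ 2) / 2)
        * ∫ t in (0:ℝ)..x, 1 / (a - b * Real.cos t) := funext hρ
    rw [hfun]
    convert h2 using 1
    · rfl
    · rfl
    field_simp
  have hρ0 : ρ 0 = 0 := by simp [hρ 0]
  -- the invariant function
  have hg : ∀ θ : ℝ, HasDerivAt (fun t : ℝ =>
      Real.cos (ρ t) * (Real.sqrt (a - b) * Real.cos (t / 2) / Real.sqrt (a - b * Real.cos t))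
      + Real.sin (ρ t) * (Real.sqrt (a + b) * Real.sin (t / 2) / Real.sqrt (a - b * Real.cos t)))
      0 θ := by
    intro θ
    have h1 := (((Real.hasDerivAt_cos (ρ θ)).comp θ (hρd θ)).mul (u_deriv hb hab θ))
    have h2 := (((Real.hasDerivAt_sin (ρ θ)).comp θ (hρd θ)).mul (v_deriv hb hab θ))
    have h3 := h1.add h2
    convert h3 using 1
    · rfl
    · rfl
    · rfl
    simp only [Function.comp]
    ring
  have hgconst : ∀ θ : ℝ,
      Real.cos (ρ θ) * (Real.sqrt (a - b) * Real.cos (θ / 2) / Real.sqrt (a - b * Real.cos θ))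
      + Real.sin (ρ θ) * (Real.sqrt (a + b) * Real.sin (θ / 2) / Real.sqrt (a - b * Real.cos θ))
      = 1 := by
    intro θ
    have hconst := is_const_of_deriv_eq_zero (f := fun t : ℝ =>
      Real.cos (ρ t) * (Real.sqrt (a - b) * Real.cos (t / 2) / Real.sqrt (a - b * Real.cos t))
      + Real.sin (ρ t) * (Real.sqrt (a + b) * Real.sin (t / 2) / Real.sqrt (a - b * Real.cos t)))
      (fun t => (hg t).differentiableAt) (fun t => (hg t).deriv) θ 0
    have h0 : Real.cos (ρ 0) * (Real.sqrt (a - b) * Real.cos ((0:ℝ) / 2) / Real.sqrt (a - b * Real.cos 0))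
      + Real.sin (ρ 0) * (Real.sqrt (a + b) * Real.sin ((0:ℝ) / 2) / Real.sqrt (a - b * Real.cos 0)) = 1 := by
      have e : a - b * Real.cos 0 = a - b := by simp
      rw [hρ0, e]
      simp
      exact (Real.sqrt_pos.mpr hba).ne'

    calc _ = _ := hconst
    _ = 1 := h0
  -- sum of squares of the closed forms
  have huv : ∀ θ : ℝ,
      (Real.sqrt (a - b) * Real.cos (θ / 2) / Real.sqrt (a - b * Real.cos θ)) ^ 2
      + (Real.sqrt (a + b) * Real.sin (θ / 2) / Real.sqrt (a - b * Real.cos θ)) ^ 2 = 1 := by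
    intro θ
    have hq2 : Real.sqrt (a - b * Real.cos θ) ^ 2 = a - b * Real.cos θ := Real.sq_sqrt (hP θ).le
    have hr : Real.sqrt (a - b) ^ 2 = a - b := Real.sq_sqrt hba.le
    have hp : Real.sqrt (a + b) ^ 2 = a + b := Real.sq_sqrt (by linarith)
    have hcos : Real.cos θ = 2 * Real.cos (θ / 2) ^ 2 - 1 := by
      rw [← Real.cos_two_mul]; ring_nf
    have hpyth := Real.sin_sq_add_cos_sq (θ / 2)
    have hqθ := hq θ
    field_simp
    linear_combination (Real.cos (θ/2) ^ 2) * hr + (Real.sin (θ/2) ^ 2) * hp - hq2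
      + b * hcos + (a + b) * hpyth
  -- the key cos/sin identities
  have key : ∀ θ : ℝ,
      Real.cos (ρ θ) = Real.sqrt (a - b) * Real.cos (θ / 2) / Real.sqrt (a - b * Real.cos θ) ∧
      Real.sin (ρ θ) = Real.sqrt (a + b) * Real.sin (θ / 2) / Real.sqrt (a - b * Real.cos θ) := by
    intro θ
    have h1 := hgconst θ
    have h2 := huv θ
    have h3 := Real.sin_sq_add_cos_sq (ρ θ)
    constructor <;> nlinarith [sq_nonneg (Real.cos (ρ θ) - Real.sqrt (a - b) * Real.cos (θ / 2) / Real.sqrt (a - b * Real.cos θ)),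
      sq_nonneg (Real.sin (ρ θ) - Real.sqrt (a + b) * Real.sin (θ / 2) / Real.sqrt (a - b * Real.cos θ))]
  -- monotonicity and continuity
  have hmono : StrictMono ρ := strictMono_of_hasDerivAt_pos hρd fun θ =>
    div_pos (Real.sqrt_pos.mpr (by nlinarith))
      (by nlinarith [Real.cos_le_one θ, Real.neg_one_le_cos θ])
  have hcont : Continuous ρ := by
    rw [continuous_iff_continuousAt]; exact fun θ => (hρd θ).continuousAt
  -- cos (ρ t) > 0 on (-π, π)
  have hcospos : ∀ t : ℝ, -π < t → t < π → 0 < Real.cos (ρ t) := by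
    intro t h1 h2
    rw [(key t).1]
    have hcpos : 0 < Real.cos (t / 2) :=
      Real.cos_pos_of_mem_Ioo ⟨by linarith, by linarith⟩
    exact div_pos (mul_pos (Real.sqrt_pos.mpr hba) hcpos) (Real.sqrt_pos.mpr (hP t))
  -- upper bound
  have hupper : ∀ θ : ℝ, θ ≤ π → ρ θ ≤ π / 2 := by
    intro θ hθ
    by_contra hcon
    push_neg at hcon
    have hθ0 : 0 < θ := by
      by_contra h
      push_neg at h
      have := hmono.le_iff_le.mpr h
      rw [hρ0] at this
      have : ρ θ ≤ 0 := by
        calc ρ θ ≤ ρ 0 := hmono.monotone h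
        _ = 0 := hρ0
      nlinarith [Real.pi_pos]
    have hiv : π / 2 ∈ Set.Icc (ρ 0) (ρ θ) := ⟨by rw [hρ0]; positivity, hcon.le⟩
    obtain ⟨t, ht, hρt⟩ := intermediate_value_Icc hθ0.le hcont.continuousOn hiv
    have htθ : t < θ := by
      rcases lt_or_eq_of_le ht.2 with h | h
      · exact h
      · rw [h] at hρt; rw [hρt] at hcon; exact absurd hcon (lt_irrefl _)
    have := hcospos t (by nlinarith [Real.pi_pos, ht.1]) (by linarith)
    rw [hρt, Real.cos_pi_div_two] at this
    exact lt_irrefl 0 this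
  have hlower : ∀ θ : ℝ, -π ≤ θ → -(π / 2) ≤ ρ θ := by
    intro θ hθ
    by_contra hcon
    push_neg at hcon
    have hθ0 : θ < 0 := by
      by_contra h
      push_neg at h
      have : (0:ℝ) ≤ ρ θ := by
        calc (0:ℝ) = ρ 0 := hρ0.symm
        _ ≤ ρ θ := hmono.monotone h
      nlinarith [Real.pi_pos]
    have hiv : -(π / 2) ∈ Set.Icc (ρ θ) (ρ 0) := ⟨hcon.le, by rw [hρ0]; nlinarith [Real.pi_pos]⟩
    obtain ⟨t, ht, hρt⟩ := intermediate_value_Icc hθ0.le hcont.continuousOn hiv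
    have htθ : θ < t := by
      rcases lt_or_eq_of_le ht.1 with h | h
      · exact h
      · rw [← h] at hρt; rw [hρt] at hcon; exact absurd hcon (lt_irrefl _)
    have := hcospos t (by linarith) (by nlinarith [Real.pi_pos, ht.2])
    rw [hρt, Real.cos_neg, Real.cos_pi_div_two] at this
    exact lt_irrefl 0 this
  -- values at ±π
  have hsinpi : Real.sin (ρ π) = 1 := by
    have e : a - b * Real.cos π = a + b := by rw [Real.cos_pi]; ring
    rw [(key π).2, e]
    rw [Real.sin_pi_div_two, mul_one]
    exact div_self (Real.sqrt_pos.mpr (by linarith)).ne'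
  have hρpi : ρ π = π / 2 := by
    have h1 := hupper π le_rfl
    have h2 : -(π / 2) ≤ ρ π := hlower π (by linarith [Real.pi_pos])
    have := Real.arcsin_sin h2 h1
    rw [hsinpi, Real.arcsin_one] at this
    linarith
  have hsinnegpi : Real.sin (ρ (-π)) = -1 := by
    have e : a - b * Real.cos (-π) = a + b := by rw [Real.cos_neg, Real.cos_pi]; ring
    rw [(key (-π)).2, e]
    rw [show ((-π)/2 : ℝ) = -(π/2) by ring, Real.sin_neg, Real.sin_pi_div_two, mul_neg_one,
      neg_div, div_self (Real.sqrt_pos.mpr (by linarith : (0:ℝ) < a + b)).ne']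
  have hρnegpi : ρ (-π) = -(π / 2) := by
    have h1 := hupper (-π) (by linarith [Real.pi_pos])
    have h2 : -(π / 2) ≤ ρ (-π) := hlower (-π) le_rfl
    have := Real.arcsin_sin h2 h1
    rw [hsinnegpi] at this
    rw [show (-1:ℝ) = -(1:ℝ) by ring, Real.arcsin_neg, Real.arcsin_one] at this
    linarith
  refine ⟨key, ?_, hρpi, hρnegpi, ?_⟩
  · -- arctan formula
    intro θ h1 h2
    have hlt : ρ θ < π / 2 := by rw [← hρpi]; exact hmono h2
    have hgt : -(π / 2) < ρ θ := by rw [← hρnegpi]; exact hmono h1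
    have hcθ : 0 < Real.cos (θ / 2) :=
      Real.cos_pos_of_mem_Ioo ⟨by linarith, by linarith⟩
    have htan : Real.tan (ρ θ) = Real.sqrt ((a + b) / (a - b)) * Real.tan (θ / 2) := by
      rw [Real.tan_eq_sin_div_cos, (key θ).1, (key θ).2, Real.tan_eq_sin_div_cos,
        Real.sqrt_div (by linarith : (0:ℝ) ≤ a + b)]
      rw [div_div_div_cancel_right₀]
      · field_simp [hcθ.ne', (Real.sqrt_pos.mpr hba).ne']
      · exact hq θ
    rw [← htan, Real.arctan_tan hgt hlt]
  · -- periodicity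
    intro θ
    have hint : ∀ x y : ℝ, IntervalIntegrable (fun t => 1 / (a - b * Real.cos t))
        MeasureTheory.volume x y := fun x y => hfc.intervalIntegrable x y
    have hper : Function.Periodic (fun t : ℝ => 1 / (a - b * Real.cos t)) (2 * π) := by
      intro t; simp [Real.cos_add_two_pi]
    have hsplit : (∫ t in (0:ℝ)..(θ + 2 * π), 1 / (a - b * Real.cos t))
        = (∫ t in (0:ℝ)..θ, 1 / (a - b * Real.cos t))
          + ∫ t in θ..(θ + 2 * π), 1 / (a - b * Real.cos t) :=
      (intervalIntegral.integral_add_adjacent_intervals (hint 0 θ) (hint θ _)).symm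
    have h2 : (∫ t in θ..(θ + 2 * π), 1 / (a - b * Real.cos t))
        = ∫ t in (-π)..(-π + 2 * π), 1 / (a - b * Real.cos t) :=
      hper.intervalIntegral_add_eq θ (-π)
    have h2' : (-π + 2 * π : ℝ) = π := by ring
    rw [h2'] at h2
    have h3 : (∫ t in (-π)..(π:ℝ), 1 / (a - b * Real.cos t))
        = (∫ t in (-π)..(0:ℝ), 1 / (a - b * Real.cos t))
          + ∫ t in (0:ℝ)..π, 1 / (a - b * Real.cos t) :=
      (intervalIntegral.integral_add_adjacent_intervals (hint _ _) (hint _ _)).symm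
    have h4 : (∫ t in (-π)..(0:ℝ), 1 / (a - b * Real.cos t))
        = -∫ t in (0:ℝ)..(-π), 1 / (a - b * Real.cos t) :=
      intervalIntegral.integral_symm _ _
    have hpi := hρ π
    have hnegpi := hρ (-π)
    rw [hρpi] at hpi
    rw [hρnegpi] at hnegpi
    rw [hρ (θ + 2 * π), hρ θ, hsplit, h2, h3, h4]
    linear_combination hnegpi - hpi
end

section
/- Fix Λ > 0, F > 0, B > 0 and J_e with |J_e| < Λ. For |K| < Λ − |J_e| set b₁(K) = Λ√((Λ − J_e)² − K²) and b₂(K) = Λ√((Λ + J_e)² − K²), and consider the planar vector field (the doubly averaged crossed-fields equations) K̇ = −(3/16) B² b₁(K) b₂(K) sin 2w_K, ẇ_K = (9/2) F² Λ⁴ K − (1/8) B² Λ² K [1 − (3/2) Λ² (Λ² + J_e² − K²) cos 2w_K/(b₁(K) b₂(K))]. Then each of (w_K, K) = (0,0), (π/2, 0), (π, 0), (3π/2, 0) is an equilibrium. Moreover, the Jacobian matrix of this vector field at (w_K, K) = (π/2, 0) has zero trace, and its determinant is negative if and only if B < B₁ := 6√2 F Λ √((Λ² − J_e²)/(5Λ²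 + J_e²)), zero if B = B₁, and positive if B > B₁; hence (π/2, 0) is a hyperbolic saddle for B < B₁ and elliptic for B > B₁. -/
open Real

set_option maxHeartbeats 1000000

/-- The doubly averaged crossed-fields equations
`K̇ = −(3/16) B² b₁(K) b₂(K) sin 2w_K`,
`ẇ_K = (9/2) F² Λ⁴ K − (1/8) B² Λ² K [1 − (3/2) Λ² (Λ² + J_e² − K²) cos 2w_K/(b₁b₂)]`
have equilibria at `(w_K, K) = (0,0), (π/2,0), (π,0), (3π/2,0)`; the Jacobian at
`(π/2, 0)` has zero trace, and its determinant is negative/zero/positive according as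
`B` is less than/equal to/greater than `B₁ = 6√2 F Λ √((Λ² − J_e²)/(5Λ² + J_e²))`. -/
theorem doubly_averaged_crossed_fields_equilibria
    (Λ F B Je : ℝ) (hΛ : 0 < Λ) (hF : 0 < F) (hB : 0 < B) (hJe : |Je| < Λ)
    (b1 b2 : ℝ → ℝ)
    (hb1 : ∀ K : ℝ, b1 K = Λ * Real.sqrt ((Λ - Je) ^ 2 - K ^ 2))
    (hb2 : ∀ K : ℝ, b2 K = Λ * Real.sqrt ((Λ + Je) ^ 2 - K ^ 2))
    (Kdot wdot : ℝ → ℝ → ℝ)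
    (hKdot : ∀ w K : ℝ, Kdot w K = -(3 / 16) * B ^ 2 * b1 K * b2 K * Real.sin (2 * w))
    (hwdot : ∀ w K : ℝ, wdot w K = (9 / 2) * F ^ 2 * Λ ^ 4 * K
      - (1 / 8) * B ^ 2 * Λ ^ 2 * K
          * (1 - (3 / 2) * Λ ^ 2 * (Λ ^ 2 + Je ^ 2 - K ^ 2) * Real.cos (2 * w)
              / (b1 K * b2 K)))
    (B1 : ℝ)
    (hB1 : B1 = 6 * Real.sqrt 2 * F * Λ
      * Real.sqrt ((Λ ^ 2 - Je ^ 2) / (5 * Λ ^ 2 + Je ^ 2)))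
    (det : ℝ)
    (hdet : det = deriv (fun w => wdot w 0) (π / 2) * deriv (fun K => Kdot (π / 2) K) 0
      - deriv (fun K => wdot (π / 2) K) 0 * deriv (fun w => Kdot w 0) (π / 2)) :
    (∀ w ∈ ({0, π / 2, π, 3 * π / 2} : Set ℝ), Kdot w 0 = 0 ∧ wdot w 0 = 0) ∧
    (deriv (fun w => wdot w 0) (π / 2) + deriv (fun K => Kdot (π / 2) K) 0 = 0) ∧
    (det < 0 ↔ B < B1) ∧ (det = 0 ↔ B = B1) ∧ (0 < det ↔ B1 < B) := by
  have hA : 0 < Λ - Je := by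
    rcases abs_lt.1 hJe with ⟨h1, h2⟩; linarith
  have hC : 0 < Λ + Je := by
    rcases abs_lt.1 hJe with ⟨h1, h2⟩; linarith
  have hP : 0 < Λ ^ 2 - Je ^ 2 := by nlinarith
  have hQ : 0 < 5 * Λ ^ 2 + Je ^ 2 := by positivity
  have hb10 : b1 0 = Λ * (Λ - Je) := by
    rw [hb1]; norm_num; rw [Real.sqrt_sq hA.le]; exact Or.inl rfl
  have hb20 : b2 0 = Λ * (Λ + Je) := by
    rw [hb2]; norm_num; rw [Real.sqrt_sq hC.le]; exact Or.inl rfl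
  -- wdot vanishes at K = 0
  have hw0 : ∀ w : ℝ, wdot w 0 = 0 := by
    intro w; rw [hwdot]; ring
  -- first Jacobian entry
  have hd1 : deriv (fun w => wdot w 0) (π / 2) = 0 := by
    have : (fun w => wdot w 0) = fun _ : ℝ => (0 : ℝ) := funext fun w => hw0 w
    rw [this, deriv_const]
  -- second Jacobian entry
  have hsinpi2 : Real.sin (2 * (π / 2)) = 0 := by
    rw [show (2 : ℝ) * (π / 2) = π by ring, Real.sin_pi]
  have hd2 : deriv (fun K => Kdot (π / 2) K) 0 = 0 := by
    have : (fun K => Kdot (π / 2) K) = fun _ : ℝ => (0 : ℝ) := by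
      funext K; rw [hKdot, hsinpi2]; ring
    rw [this, deriv_const]
  -- third Jacobian entry
  have hd3 : deriv (fun w => Kdot w 0) (π / 2)
      = (3 / 8) * B ^ 2 * Λ ^ 2 * (Λ ^ 2 - Je ^ 2) := by
    have hfun : (fun w => Kdot w 0)
        = fun w => (-(3 / 16) * B ^ 2 * (Λ * (Λ - Je)) * (Λ * (Λ + Je))) * Real.sin (2 * w) := by
      funext w; rw [hKdot, hb10, hb20]
    rw [hfun]
    have h : HasDerivAt (fun w : ℝ => Real.sin (2 * w)) (Real.cos (2 * (π / 2)) * 2) (π / 2) := by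
      have := (Real.hasDerivAt_sin (2 * (π / 2))).comp (π / 2)
        ((hasDerivAt_id (π / 2)).const_mul 2)
      exact this.congr_deriv (by ring)
    rw [(h.const_mul _).deriv, show (2 : ℝ) * (π / 2) = π by ring, Real.cos_pi]
    ring
  -- fourth Jacobian entry
  set g : ℝ → ℝ := fun K => (9 / 2) * F ^ 2 * Λ ^ 4
      - (1 / 8) * B ^ 2 * Λ ^ 2
          * (1 - (3 / 2) * Λ ^ 2 * (Λ ^ 2 + Je ^ 2 - K ^ 2) * Real.cos (2 * (π / 2))
              / (b1 K * b2 K)) with hg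
  have hb1d : DifferentiableAt ℝ b1 0 := by
    have hb1f : b1 = fun K => Λ * Real.sqrt ((Λ - Je) ^ 2 - K ^ 2) := funext hb1
    rw [hb1f]
    have h1 : DifferentiableAt ℝ (fun K : ℝ => (Λ - Je) ^ 2 - K ^ 2) 0 := by fun_prop
    have h2 : ((Λ - Je) ^ 2 - (0 : ℝ) ^ 2) ≠ 0 := by
      have : 0 < (Λ - Je) ^ 2 := by positivity
      nlinarith
    exact (((Real.hasDerivAt_sqrt h2).differentiableAt).comp 0 h1).const_mul Λ
  have hb2d : DifferentiableAt ℝ b2 0 := by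
    have hb2f : b2 = fun K => Λ * Real.sqrt ((Λ + Je) ^ 2 - K ^ 2) := funext hb2
    rw [hb2f]
    have h1 : DifferentiableAt ℝ (fun K : ℝ => (Λ + Je) ^ 2 - K ^ 2) 0 := by fun_prop
    have h2 : ((Λ + Je) ^ 2 - (0 : ℝ) ^ 2) ≠ 0 := by
      have : 0 < (Λ + Je) ^ 2 := by positivity
      nlinarith
    exact (((Real.hasDerivAt_sqrt h2).differentiableAt).comp 0 h1).const_mul Λ
  have hden : b1 0 * b2 0 ≠ 0 := by
    rw [hb10, hb20]; positivity
  have hgd : DifferentiableAt ℝ g 0 := by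
    rw [hg]
    apply DifferentiableAt.sub (differentiableAt_const _)
    apply DifferentiableAt.const_mul
    apply DifferentiableAt.sub (differentiableAt_const _)
    apply DifferentiableAt.div _ (hb1d.mul hb2d) hden
    fun_prop
  have hd4 : deriv (fun K => wdot (π / 2) K) 0 = g 0 := by
    have hfg : (fun K => wdot (π / 2) K) = fun K => K * g K := by
      funext K; rw [hwdot, hg]; ring
    rw [hfg]
    have h : HasDerivAt (fun K : ℝ => K * g K) (1 * g 0 + 0 * deriv g 0) 0 :=
      (hasDerivAt_id 0).mul hgd.hasDerivAt
    rw [h.deriv]; ring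
  have hg0 : g 0 = (9 / 2) * F ^ 2 * Λ ^ 4
      - (1 / 8) * B ^ 2 * Λ ^ 2 * (1 + (3 / 2) * (Λ ^ 2 + Je ^ 2) / (Λ ^ 2 - Je ^ 2)) := by
    rw [hg]
    have hcos : Real.cos (2 * (π / 2)) = -1 := by
      rw [show (2 : ℝ) * (π / 2) = π by ring, Real.cos_pi]
    simp only [hcos, hb10, hb20]
    have hΛ0 : Λ ≠ 0 := ne_of_gt hΛ
    field_simp
    ring
  -- explicit determinant
  have hB1sq : B1 ^ 2 = 72 * F ^ 2 * Λ ^ 2 * ((Λ ^ 2 - Je ^ 2) / (5 * Λ ^ 2 + Je ^ 2)) := by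
    have h2 : (Real.sqrt 2) ^ 2 = 2 := Real.sq_sqrt (by norm_num)
    have hpq : (Real.sqrt ((Λ ^ 2 - Je ^ 2) / (5 * Λ ^ 2 + Je ^ 2))) ^ 2
        = (Λ ^ 2 - Je ^ 2) / (5 * Λ ^ 2 + Je ^ 2) :=
      Real.sq_sqrt (by positivity)
    rw [hB1]
    calc (6 * Real.sqrt 2 * F * Λ * Real.sqrt ((Λ ^ 2 - Je ^ 2) / (5 * Λ ^ 2 + Je ^ 2))) ^ 2
        = 36 * (Real.sqrt 2) ^ 2 * F ^ 2 * Λ ^ 2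
            * (Real.sqrt ((Λ ^ 2 - Je ^ 2) / (5 * Λ ^ 2 + Je ^ 2))) ^ 2 := by ring
      _ = 72 * F ^ 2 * Λ ^ 2 * ((Λ ^ 2 - Je ^ 2) / (5 * Λ ^ 2 + Je ^ 2)) := by
          rw [h2, hpq]; ring
  have hkey : det = (3 / 128) * B ^ 2 * Λ ^ 4 * (5 * Λ ^ 2 + Je ^ 2) * (B ^ 2 - B1 ^ 2) := by
    rw [hdet, hd1, hd2, hd3, hd4, hg0, hB1sq]
    have hP0 : (Λ ^ 2 - Je ^ 2) ≠ 0 := ne_of_gt hP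
    have hQ0 : (5 * Λ ^ 2 + Je ^ 2) ≠ 0 := ne_of_gt hQ
    field_simp
    ring
  have hcoef : 0 < (3 / 128) * B ^ 2 * Λ ^ 4 * (5 * Λ ^ 2 + Je ^ 2) := by positivity
  have hB1pos : 0 < B1 := by
    rw [hB1]
    have h1 : 0 < (Λ ^ 2 - Je ^ 2) / (5 * Λ ^ 2 + Je ^ 2) := div_pos hP hQ
    have h2 : 0 < Real.sqrt ((Λ ^ 2 - Je ^ 2) / (5 * Λ ^ 2 + Je ^ 2)) := Real.sqrt_pos.2 h1
    have h3 : 0 < Real.sqrt 2 := Real.sqrt_pos.2 (by norm_num)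
    positivity
  have hlt : det < 0 ↔ B < B1 := by
    rw [hkey]
    constructor
    · intro h
      have hsq : B ^ 2 < B1 ^ 2 := by
        by_contra hc; push_neg at hc
        nlinarith [mul_nonneg hcoef.le (sub_nonneg.2 hc)]
      exact lt_of_pow_lt_pow_left₀ 2 hB1pos.le hsq
    · intro h
      have hsq : B ^ 2 - B1 ^ 2 < 0 := by nlinarith
      exact mul_neg_of_pos_of_neg hcoef hsq
  have hgt : 0 < det ↔ B1 < B := by
    rw [hkey]
    constructor
    · intro h
      have hsq : B1 ^ 2 < B ^ 2 := by
        by_contra hc; push_neg at hc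
        nlinarith [mul_nonpos_of_nonneg_of_nonpos hcoef.le (sub_nonpos.2 hc)]
      exact lt_of_pow_lt_pow_left₀ 2 hB.le hsq
    · intro h
      have hsq : 0 < B ^ 2 - B1 ^ 2 := by nlinarith
      exact mul_pos hcoef hsq
  have heq : det = 0 ↔ B = B1 := by
    constructor
    · intro h
      rcases lt_trichotomy B B1 with h' | h' | h'
      · exact absurd (hlt.2 h') (by rw [h]; exact lt_irrefl 0)
      · exact h'
      · exact absurd (hgt.2 h') (by rw [h]; exact lt_irrefl 0)
    · intro h
      rcases lt_trichotomy det 0 with h' | h' | h'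
      · exact absurd (hlt.1 h') (by rw [h]; exact lt_irrefl B1)
      · exact h'
      · exact absurd (hgt.1 h') (by rw [h]; exact lt_irrefl B1)
  refine ⟨?_, by rw [hd1, hd2]; ring, hlt, heq, hgt⟩
  intro w hw
  refine ⟨?_, hw0 w⟩
  have hs : Real.sin (2 * w) = 0 := by
    rcases hw with h | h | h | h
    · rw [h]; norm_num
    · rw [h]; exact hsinpi2
    · rw [Set.mem_singleton_iff.1 h]
      exact Real.sin_two_pi
    · rw [h, show (2 : ℝ) * (3 * π / 2) = 3 * π by ring]
      have := Real.sin_int_mul_pi 3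
      push_cast at this
      exact this
  rw [hKdot, hs]; ring
end
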